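/- Let M be a matroid, let S, T be disjoint subsets of E(M), let k := κ_M(S,T), and let F ⊆ E(M) − (S ∪ T) be a set of elements each of which is non-flexible with respect to (S,T). Then there exist an ordering (f₁, f₂, …, f_t) of F and a sequence (A₁, A₂, …, A_t) of subsets of E(M) such that: (1) for each i ∈ {1,…,t}, S ⊆ A_i, T ⊆ E(M) − A_i, and λ_M(A_i) = k; (2) A_i ⊆ A_{i+1} for each i ∈ {1,…,t−1}; (3) A_i ∩ F = {f₁, …, f_i} for each i ∈ {1,…,t}; (4) for each i, either f_i ∈ cl_M(A_i − {f_i}) ∩ cl_M(E(M) − A_i), or f_i ∈ cl*_M(A_i − {f_i}) ∩ cl*_M(E(M) − A_i). -/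

import Mathlib

open Set Matroid

namespace Intertwine

variable {α : Type*}

/-- The (extended) rank of a set in a matroid: the supremum of the cardinalities of its
independent subsets. -/
noncomputable def eRk (M : Matroid α) (X : Set α) : ℕ∞ :=
  ⨆ I ∈ {I : Set α | M.Indep I ∧ I ⊆ X}, I.encard

/-- The connectivity function `λ_M(X) = r(X) + r(E \ X) - r(M)`. -/
noncomputable def lam (M : Matroid α) (X : Set α) : ℕ∞ :=
  eRk M X + eRk M (M.E \ X) - eRk M M.E

/-- The connectivity between `S` and `T`:
`κ_M(S,T) = min {λ_M(X) : S ⊆ X ⊆ E \ T}`. -/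
noncomputable def kap (M : Matroid α) (S T : Set α) : ℕ∞ :=
  ⨅ X ∈ {X : Set α | S ⊆ X ∧ X ⊆ M.E \ T}, lam M X

/-- Deletion of a set of elements. -/
def del (M : Matroid α) (D : Set α) : Matroid α := M ↾ (M.E \ D)

/-- Contraction of a set of elements, via duality: `M / C = (M* \ C)*`. -/
def con (M : Matroid α) (C : Set α) : Matroid α := (del M✶ C)✶

/-- `N` is a minor of `M` if `N = M / C \ D` for disjoint subsets `C, D` of `E(M)`. -/
def IsMinor (N M : Matroid α) : Prop :=
  ∃ C D : Set α, C ⊆ M.E ∧ D ⊆ M.E ∧ Disjoint C D ∧ N = del (con M C) D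

/-- `M` is representable over the field `𝔽` if its independent sets are exactly the
sets on which some vector-valued function is linearly independent. -/
def IsRepresentable (𝔽 : Type*) [Field 𝔽] (M : Matroid α) : Prop :=
  ∃ (B : Set α) (v : α → (B →₀ 𝔽)),
    ∀ I : Set α, M.Indep I ↔ I ⊆ M.E ∧ LinearIndependent 𝔽 (fun x : I ↦ v x)

end Intertwine




namespace IntertwineProof

open Intertwine Set Matroid

variable {α : Type*} {M : Matroid α} {X Y I J B S T : Set α} {e x y : α}

lemma le_eRk (hI : M.Indep I) (hIX : I ⊆ X) : I.encard ≤ Intertwine.eRk M X := by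
  refine le_trans ?_ (le_iSup₂ (f := fun I (_ : I ∈ {I : Set α | M.Indep I ∧ I ⊆ X}) => I.encard)
    I ⟨hI, hIX⟩)
  exact le_rfl

lemma eRk_le {c : ℕ∞} (h : ∀ I, M.Indep I → I ⊆ X → I.encard ≤ c) : Intertwine.eRk M X ≤ c :=
  iSup₂_le fun I hI => h I hI.1 hI.2

lemma eRk_mono (hXY : X ⊆ Y) : Intertwine.eRk M X ≤ Intertwine.eRk M Y :=
  eRk_le fun I hI hIX => le_eRk hI (hIX.trans hXY)

lemma eRk_le_ground (X : Set α) : Intertwine.eRk M X ≤ Intertwine.eRk M M.E :=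
  eRk_le fun _I hI _ => le_eRk hI hI.subset_ground

lemma eRk_ne_top (hfin : Intertwine.eRk M M.E ≠ ⊤) (X : Set α) : Intertwine.eRk M X ≠ ⊤ :=
  fun h => hfin (top_le_iff.mp (h ▸ eRk_le_ground X))

lemma Basis_eRk (hI : M.IsBasis I X) : Intertwine.eRk M X = I.encard := by
  refine le_antisymm (eRk_le fun J hJ hJX => ?_) (le_eRk hI.indep hI.subset)
  by_contra hlt
  push_neg at hlt
  obtain ⟨x, hxJI, hx⟩ := hI.indep.augment hJ hlt
  have := hI.eq_of_subset_indep hx (subset_insert _ _) (insert_subset (hJX hxJI.1) hI.subset)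
  exact hxJI.2 (this ▸ mem_insert _ _)

lemma base_eRk (hB : M.IsBase B) : Intertwine.eRk M M.E = B.encard := Basis_eRk hB.isBasis_ground

lemma eRk_empty (M : Matroid α) : Intertwine.eRk M ∅ = 0 := by
  rw [Basis_eRk (M.empty_indep.isBasis_self), encard_empty]

lemma indep_finite (hfin : Intertwine.eRk M M.E ≠ ⊤) (hI : M.Indep I) : I.Finite := by
  rw [← encard_lt_top_iff]
  exact lt_of_le_of_lt (le_eRk hI hI.subset_ground) (lt_top_iff_ne_top.mpr hfin)

lemma eRk_inter_ground (M : Matroid α) (X : Set α) : Intertwine.eRk M (X ∩ M.E) = Intertwine.eRk M X :=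
  le_antisymm (eRk_mono inter_subset_left)
    (eRk_le fun K hK hKX => le_eRk hK (subset_inter hKX hK.subset_ground))

lemma encard_le_eRk_of_subset_closure (hJ : M.Indep J) (hJX : J ⊆ M.closure X) :
    J.encard ≤ Intertwine.eRk M X := by
  obtain ⟨I, hI⟩ := M.exists_isBasis (X ∩ M.E) inter_subset_right
  have hcl : M.closure I = M.closure X := by
    rw [hI.closure_eq_closure, closure_inter_ground]
  rw [← eRk_inter_ground, Basis_eRk hI]
  refine le_of_not_gt fun hlt => ?_
  obtain ⟨x, hxJI, hx⟩ := hI.indep.augment hJ hlt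
  have hxcl : x ∈ M.closure I := by rw [hcl]; exact hJX hxJI.1
  exact ((hI.indep.insert_indep_iff_of_notMem hxJI.2).mp hx).2 hxcl

lemma eRk_closure (M : Matroid α) (X : Set α) : Intertwine.eRk M (M.closure X) = Intertwine.eRk M X := by
  refine le_antisymm (eRk_le fun J hJ hJX => encard_le_eRk_of_subset_closure hJ hJX) ?_
  refine eRk_le fun J hJ hJX => le_eRk hJ ?_
  exact (subset_inter hJX hJ.subset_ground).trans (M.inter_ground_subset_closure X)

lemma eRk_insert_le (M : Matroid α) (x : α) (X : Set α) :
    Intertwine.eRk M (insert x X) ≤ Intertwine.eRk M X + 1 := by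
  refine eRk_le fun J hJ hJX => ?_
  have h1 : J.encard ≤ (J \ {x}).encard + 1 := by
    by_cases hx : x ∈ J
    · rw [encard_diff_singleton_add_one hx]
    · rw [diff_singleton_eq_self hx]; exact le_self_add
  exact h1.trans (add_le_add_left (le_eRk (hJ.diff _) (by
    rw [diff_subset_iff, singleton_union]; exact hJX)) 1)

lemma eRk_submod (hX : X ⊆ M.E) (hY : Y ⊆ M.E) :
    Intertwine.eRk M (X ∪ Y) + Intertwine.eRk M (X ∩ Y) ≤ Intertwine.eRk M X + Intertwine.eRk M Y := by
  obtain ⟨I, hI⟩ := M.exists_isBasis (X ∩ Y) ((inter_subset_left).trans hX)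
  obtain ⟨J, hJ, hIJ⟩ := hI.indep.subset_isBasis_of_subset
    (hI.subset.trans (by intro z hz; exact Or.inl hz.1 : X ∩ Y ⊆ X ∪ Y)) (union_subset hX hY)
  have hJX : (J ∩ X).encard ≤ Intertwine.eRk M X := le_eRk (hJ.indep.inter_right X) inter_subset_right
  have hJY : (J ∩ Y).encard ≤ Intertwine.eRk M Y := le_eRk (hJ.indep.inter_right Y) inter_subset_right
  have hun : (J ∩ X) ∪ (J ∩ Y) = J := by
    rw [← inter_union_distrib_left]; exact inter_eq_left.mpr hJ.subset
  have hkey : (J ∩ X).encard + (J ∩ Y).encard = J.encard + ((J ∩ X) ∩ (J ∩ Y)).encard := by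
    rw [← encard_union_add_encard_inter, hun]
  have hIsub : I ⊆ (J ∩ X) ∩ (J ∩ Y) := by
    rw [← inter_inter_distrib_left]
    exact subset_inter hIJ hI.subset
  calc Intertwine.eRk M (X ∪ Y) + Intertwine.eRk M (X ∩ Y) = J.encard + I.encard := by
        rw [Basis_eRk hJ, Basis_eRk hI]
    _ ≤ J.encard + ((J ∩ X) ∩ (J ∩ Y)).encard := add_le_add_right (encard_mono hIsub) _
    _ = (J ∩ X).encard + (J ∩ Y).encard := hkey.symm
    _ ≤ Intertwine.eRk M X + Intertwine.eRk M Y := add_le_add hJX hJY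


lemma eRk_insert_eq_of_mem_closure (hxX : x ∈ M.closure X) :
    Intertwine.eRk M (insert x X) = Intertwine.eRk M X := by
  have hx : x ∈ M.E := mem_ground_of_mem_closure hxX
  refine le_antisymm ?_ (eRk_mono (subset_insert _ _))
  rw [← eRk_inter_ground (X := insert x X), ← eRk_closure M X]
  refine eRk_mono ?_
  rw [insert_inter_of_mem hx]
  exact insert_subset hxX ((inter_ground_subset_closure M X))

lemma eRk_insert_eq_add_one (hX : X ⊆ M.E) (hx : x ∈ M.E) (hxX : x ∉ M.closure X) :
    Intertwine.eRk M (insert x X) = Intertwine.eRk M X + 1 := by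
  obtain ⟨I, hI⟩ := M.exists_isBasis X hX
  have hxI : x ∉ M.closure I := by rwa [hI.closure_eq_closure]
  have hxnI : x ∉ I := fun h => hxI (M.subset_closure I hI.indep.subset_ground |>.trans
    (subset_refl _) h)
  have hins : M.Indep (insert x I) := by
    rw [hI.indep.insert_indep_iff_of_notMem hxnI]; exact ⟨hx, hxI⟩
  refine le_antisymm (eRk_insert_le M x X) ?_
  have := le_eRk hins (insert_subset_insert hI.subset)
  rwa [encard_insert_of_notMem hxnI, Basis_eRk hI] at *

noncomputable def nr (M : Matroid α) (X : Set α) : ℕ := (Intertwine.eRk M X).toNat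

lemma coe_nr (hfin : Intertwine.eRk M M.E ≠ ⊤) (X : Set α) : (nr M X : ℕ∞) = Intertwine.eRk M X :=
  ENat.coe_toNat (eRk_ne_top hfin X)

lemma nr_eq_of_eRk_eq (hfin : Intertwine.eRk M M.E ≠ ⊤) (h : Intertwine.eRk M X = Intertwine.eRk M Y) : nr M X = nr M Y := by
  unfold nr; rw [h]

lemma nr_mono (hfin : Intertwine.eRk M M.E ≠ ⊤) (hXY : X ⊆ Y) : nr M X ≤ nr M Y := by
  have := eRk_mono (M := M) hXY
  rw [← coe_nr hfin, ← coe_nr hfin] at this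
  exact_mod_cast this

lemma nr_insert_le (hfin : Intertwine.eRk M M.E ≠ ⊤) (x : α) (X : Set α) :
    nr M (insert x X) ≤ nr M X + 1 := by
  have := eRk_insert_le M x X
  rw [← coe_nr hfin, ← coe_nr hfin] at this
  exact_mod_cast this

lemma nr_submod (hfin : Intertwine.eRk M M.E ≠ ⊤) (hX : X ⊆ M.E) (hY : Y ⊆ M.E) :
    nr M (X ∪ Y) + nr M (X ∩ Y) ≤ nr M X + nr M Y := by
  have := eRk_submod hX hY
  rw [← coe_nr hfin, ← coe_nr hfin, ← coe_nr hfin, ← coe_nr hfin] at this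
  exact_mod_cast this

lemma nr_ground_le (hfin : Intertwine.eRk M M.E ≠ ⊤) (hX : X ⊆ M.E) :
    nr M M.E ≤ nr M X + nr M (M.E \ X) := by
  have h := nr_submod (Y := M.E \ X) hfin hX diff_subset
  rwa [union_diff_cancel hX, inter_diff_self,
    show nr M ∅ = 0 from by unfold nr; rw [eRk_empty]; rfl, add_zero] at h

lemma nr_insert_eq_of_mem_closure (hfin : Intertwine.eRk M M.E ≠ ⊤) (hxX : x ∈ M.closure X) :
    nr M (insert x X) = nr M X :=
  nr_eq_of_eRk_eq hfin (eRk_insert_eq_of_mem_closure hxX)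

lemma nr_insert_eq_add_one (hfin : Intertwine.eRk M M.E ≠ ⊤) (hX : X ⊆ M.E) (hx : x ∈ M.E)
    (hxX : x ∉ M.closure X) : nr M (insert x X) = nr M X + 1 := by
  have := eRk_insert_eq_add_one hX hx hxX
  rw [← coe_nr hfin, ← coe_nr hfin] at this
  exact_mod_cast this

lemma mem_closure_iff_nr (hfin : Intertwine.eRk M M.E ≠ ⊤) (hX : X ⊆ M.E) (hx : x ∈ M.E) :
    x ∈ M.closure X ↔ nr M (insert x X) = nr M X := by
  constructor
  · exact nr_insert_eq_of_mem_closure hfin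
  · intro h
    by_contra hc
    have := nr_insert_eq_add_one hfin hX hx hc
    omega

lemma not_mem_closure_iff_nr (hfin : Intertwine.eRk M M.E ≠ ⊤) (hX : X ⊆ M.E) (hx : x ∈ M.E) :
    x ∉ M.closure X ↔ nr M (insert x X) = nr M X + 1 := by
  constructor
  · exact nr_insert_eq_add_one hfin hX hx
  · intro h hc
    have := nr_insert_eq_of_mem_closure hfin hc
    omega

lemma lam_cast {M : Matroid α} (hfin : Intertwine.eRk M M.E ≠ ⊤) (X : Set α) :
    lam M X = ((nr M X + nr M (M.E \ X) - nr M M.E : ℕ) : ℕ∞) := by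
  unfold lam
  rw [← coe_nr hfin X, ← coe_nr hfin (M.E \ X), ← coe_nr hfin M.E]
  exact_mod_cast rfl

lemma kap_le_lam {M : Matroid α} (h1 : S ⊆ X) (h2 : X ⊆ M.E \ T) : kap M S T ≤ lam M X :=
  iInf₂_le X ⟨h1, h2⟩

lemma le_kap {M : Matroid α} {c : ℕ∞} (h : ∀ X, S ⊆ X → X ⊆ M.E \ T → c ≤ lam M X) :
    c ≤ kap M S T :=
  le_iInf₂ fun X hX => h X hX.1 hX.2

lemma exists_kap_min {M : Matroid α} (hne : S ⊆ M.E \ T) :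
    ∃ X, S ⊆ X ∧ X ⊆ M.E \ T ∧ lam M X = kap M S T := by
  by_cases htop : kap M S T = ⊤
  · exact ⟨S, subset_rfl, hne, le_antisymm (htop ▸ le_top) (kap_le_lam subset_rfl hne)⟩
  · have hlt : kap M S T < kap M S T + 1 := (ENat.lt_add_one_iff htop).mpr le_rfl
    have : (⨅ X ∈ {X : Set α | S ⊆ X ∧ X ⊆ M.E \ T}, lam M X) < kap M S T + 1 := hlt
    rw [iInf_lt_iff] at this
    obtain ⟨X, hX⟩ := this
    rw [iInf_lt_iff] at hX
    obtain ⟨hXf, hXlt⟩ := hX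
    exact ⟨X, hXf.1, hXf.2, le_antisymm ((ENat.lt_add_one_iff htop).mp hXlt)
      (kap_le_lam hXf.1 hXf.2)⟩


/-! ### attained rank -/

lemma eRk_attained (M : Matroid α) (X : Set α) (h : Intertwine.eRk M X ≠ ⊤) :
    ∃ I, M.Indep I ∧ I ⊆ X ∧ I.encard = Intertwine.eRk M X := by
  set n := (Intertwine.eRk M X).toNat with hn
  have hcast : Intertwine.eRk M X = (n : ℕ∞) := (ENat.coe_toNat h).symm
  rcases Nat.eq_zero_or_pos n with h0 | hpos
  · exact ⟨∅, M.empty_indep, empty_subset _, by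
      rw [encard_empty, hcast, h0]; rfl⟩
  · have hlt : ((n - 1 : ℕ) : ℕ∞) < Intertwine.eRk M X := by
      rw [hcast]; exact_mod_cast Nat.sub_lt hpos one_pos
    rw [show Intertwine.eRk M X = ⨆ I ∈ {I : Set α | M.Indep I ∧ I ⊆ X}, I.encard from rfl,
      lt_iSup_iff] at hlt
    obtain ⟨I, hI⟩ := hlt
    rw [lt_iSup_iff] at hI
    obtain ⟨⟨hI1, hI2⟩, hIlt⟩ := hI
    refine ⟨I, hI1, hI2, le_antisymm (le_eRk hI1 hI2) ?_⟩
    have hIle : I.encard ≤ (n : ℕ∞) := hcast ▸ le_eRk hI1 hI2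
    have hIne : I.encard ≠ ⊤ := fun ht => by simp [ht] at hIle
    set m := I.encard.toNat with hmdef
    have hm : (m : ℕ∞) = I.encard := ENat.coe_toNat hIne
    rw [← hm] at hIlt hIle ⊢
    rw [hcast]
    have h1 : n - 1 < m := by exact_mod_cast hIlt
    have h2 : m ≤ n := by exact_mod_cast hIle
    exact_mod_cast (by omega : n ≤ m)

/-! ### iterated augmentation -/

lemma augment_to (hJ : M.Indep J) (e : α) :
    ∀ n : ℕ, ∀ I, M.Indep I → I ⊆ insert e J → J.encard ≤ I.encard + n →
      ∃ K, M.Indep K ∧ I ⊆ K ∧ K ⊆ insert e J ∧ J.encard ≤ K.encard := by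
  intro n
  induction n with
  | zero => intro I hI hIJ hle; exact ⟨I, hI, subset_rfl, hIJ, by simpa using hle⟩
  | succ n ih =>
    intro I hI hIJ hle
    by_cases hc : J.encard ≤ I.encard
    · exact ⟨I, hI, subset_rfl, hIJ, hc⟩
    · push_neg at hc
      obtain ⟨x, hxJI, hxind⟩ := hI.augment hJ hc
      have hxsub : insert x I ⊆ insert e J := insert_subset (mem_insert_of_mem _ hxJI.1) hIJ
      have hcard : J.encard ≤ (insert x I).encard + n := by
        rw [encard_insert_of_notMem hxJI.2]
        calc J.encard ≤ I.encard + (n + 1) := hle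
          _ = I.encard + 1 + n := by ring
      obtain ⟨K, h1, h2, h3, h4⟩ := ih (insert x I) hxind hxsub hcard
      exact ⟨K, h1, (subset_insert _ _).trans h2, h3, h4⟩

/-! ### deletion -/

lemma del_ground (M : Matroid α) (D : Set α) : (del M D).E = M.E \ D := rfl

lemma del_indep_iff {D : Set α} : (del M D).Indep I ↔ M.Indep I ∧ I ⊆ M.E \ D :=
  restrict_indep_iff

lemma eRk_del (M : Matroid α) (D X : Set α) : Intertwine.eRk (del M D) X = Intertwine.eRk M (X ∩ (M.E \ D)) := by
  refine le_antisymm (eRk_le fun I hI hIX => ?_) (eRk_le fun I hI hIX => ?_)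
  · rw [del_indep_iff] at hI
    exact le_eRk hI.1 (subset_inter hIX hI.2)
  · exact le_eRk (del_indep_iff.mpr ⟨hI, hIX.trans inter_subset_right⟩)
      (hIX.trans inter_subset_left)

/-! ### contraction -/

lemma con_ground (M : Matroid α) (e : α) : (con M {e}).E = M.E \ {e} := rfl

lemma con_indep_iff' :
    (con M {e}).Indep I ↔ I ⊆ M.E \ {e} ∧ ∃ B, M✶.IsBasis B (M.E \ {e}) ∧ Disjoint I B := by
  unfold con del
  rw [dual_indep_iff_exists']
  constructor
  · rintro ⟨hIE, B, hB, hdisj⟩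
    rw [restrict_ground_eq] at hIE
    rw [show M✶.E = M.E from rfl] at *
    exact ⟨hIE, B, (isBase_restrict_iff (diff_subset)).mp hB, hdisj⟩
  · rintro ⟨hIE, B, hB, hdisj⟩
    exact ⟨by rw [restrict_ground_eq]; exact hIE, B,
      (isBase_restrict_iff (diff_subset)).mpr hB, hdisj⟩

lemma con_indep_of_insert (hI : M.Indep (insert e I)) (hIe : I ⊆ M.E \ {e}) :
    (con M {e}).Indep I := by
  obtain ⟨B₀, hB₀, hsub⟩ := hI.exists_isBase_superset
  have heB₀ : e ∈ B₀ := hsub (mem_insert _ _)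
  refine con_indep_iff'.mpr ⟨hIe, M.E \ B₀, ?_, ?_⟩
  · exact IsBase.isBasis_of_subset diff_subset hB₀.compl_isBase_dual
      (fun z hz => ⟨hz.1, fun hze => hz.2 (hze ▸ heB₀)⟩)
  · exact disjoint_left.mpr fun z hz hz2 => hz2.2 (hsub (mem_insert_of_mem _ hz))

lemma loop_not_mem_base (he : e ∈ M.E) (hloop : ¬M.Indep {e}) (hB : M.IsBase B) : e ∉ B :=
  fun heB => hloop (hB.indep.subset (singleton_subset_iff.mpr heB))

lemma con_indep_of_loop (he : e ∈ M.E) (hloop : ¬M.Indep {e}) (hI : M.Indep I)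
    (hIe : I ⊆ M.E \ {e}) : (con M {e}).Indep I := by
  obtain ⟨B₀, hB₀, hsub⟩ := hI.exists_isBase_superset
  have heB₀ : e ∉ B₀ := loop_not_mem_base he hloop hB₀
  have hBdual : M✶.IsBase (M.E \ B₀) := hB₀.compl_isBase_dual
  have heB' : e ∈ M.E \ B₀ := ⟨he, heB₀⟩
  refine con_indep_iff'.mpr ⟨hIe, (M.E \ B₀) \ {e}, ?_, ?_⟩
  · refine Indep.isBasis_of_maximal_subset (hBdual.indep.subset diff_subset)
      (fun z hz => ⟨hz.1.1, hz.2⟩) ?_ diff_subset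
    intro J hJ hsubJ hJsub
    obtain ⟨hJE, B₁, hB₁, hdisj⟩ := dual_indep_iff_exists'.mp hJ
    have heB₁ : e ∉ B₁ := loop_not_mem_base he hloop hB₁
    have hJe : M✶.Indep (insert e J) := by
      rw [dual_indep_iff_exists']
      exact ⟨insert_subset he hJE, B₁, hB₁, disjoint_left.mpr fun z hz => by
        rcases mem_insert_iff.mp hz with rfl | hzJ
        · exact heB₁
        · exact disjoint_left.mp hdisj hzJ⟩
    have hsub2 : M.E \ B₀ ⊆ insert e J := by
      intro z hz
      by_cases hze : z = e
      · exact hze ▸ mem_insert _ _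
      · exact mem_insert_of_mem _ (hsubJ ⟨hz, hze⟩)
    have heq := hBdual.eq_of_subset_indep hJe hsub2
    intro z hz
    have hzB' : z ∈ M.E \ B₀ := by
      rw [heq]; exact mem_insert_of_mem _ hz
    exact mem_diff_singleton.mpr ⟨hzB', (hJsub hz).2⟩
  · exact disjoint_left.mpr fun z hz hz2 => hz2.1.2 (hsub hz)


lemma nonloop_not_mem_closure_empty (hee : M.Indep {e}) : e ∉ M.closure ∅ := by
  have h := (M.empty_indep.insert_indep_iff_of_notMem (notMem_empty e)).mp
    (by rwa [insert_empty_eq])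
  exact h.2

lemma base_of_spanning_encard {W : Set α} (hfin : Intertwine.eRk M M.E ≠ ⊤) (hW : W ⊆ M.E)
    (hsp : M.E ⊆ M.closure W) (hcard : W.encard = Intertwine.eRk M M.E) : M.IsBase W := by
  obtain ⟨Iw, hIw⟩ := M.exists_isBasis W hW
  have h1 : Intertwine.eRk M W = Intertwine.eRk M M.E := by
    refine le_antisymm (eRk_le_ground W) ?_
    have h2 : Intertwine.eRk M M.E ≤ Intertwine.eRk M (M.closure W) := eRk_mono hsp
    rwa [eRk_closure] at h2
  have hWfin : W.Finite := by
    rw [← encard_lt_top_iff, hcard]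
    exact lt_top_iff_ne_top.mpr hfin
  have hIW : Iw = W := hWfin.eq_of_subset_of_encard_le' hIw.subset
    (by rw [hcard, ← h1, Basis_eRk hIw])
  exact (hIW ▸ hIw.indep).isBase_of_ground_subset_closure hsp

lemma exists_minimal_closure_subset :
    ∀ n : ℕ, ∀ I : Set α, I.Finite → I.ncard ≤ n → e ∈ M.closure I →
      ∃ J, J ⊆ I ∧ e ∈ M.closure J ∧ ∀ w ∈ J, e ∉ M.closure (J \ {w}) := by
  intro n
  induction n with
  | zero =>
    intro I hfin hcard he
    have : I = ∅ := by
      rw [← ncard_eq_zero hfin]; omega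
    exact ⟨I, subset_rfl, he, fun w hw => absurd hw (by rw [this]; exact notMem_empty w)⟩
  | succ n ih =>
    intro I hfin hcard he
    by_cases hmin : ∀ w ∈ I, e ∉ M.closure (I \ {w})
    · exact ⟨I, subset_rfl, he, hmin⟩
    · push_neg at hmin
      obtain ⟨w, hwI, hw⟩ := hmin
      have hlt : (I \ {w}).ncard ≤ n := by
        have := ncard_diff_singleton_lt_of_mem hwI hfin
        omega
      obtain ⟨J, hJ1, hJ2, hJ3⟩ := ih (I \ {w}) hfin.diff hlt hw
      exact ⟨J, hJ1.trans diff_subset, hJ2, hJ3⟩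

lemma con_indep_dest (hfin : Intertwine.eRk M M.E ≠ ⊤) (he : e ∈ M.E) (hee : M.Indep {e})
    (hI : (con M {e}).Indep I) : M.Indep (insert e I) := by
  obtain ⟨hIE, Bs, hBs, hdisj⟩ := con_indep_iff'.mp hI
  obtain ⟨Bb, hBb, hBeq⟩ := hBs.exists_isBase
  have hB₀ : M.IsBase (M.E \ Bb) := hBb.compl_isBase_of_dual
  by_cases heBb : e ∈ Bb
  · set B₀ := M.E \ Bb with hB₀def
    have hIB₀ : I ⊆ B₀ := fun z hz => ⟨(hIE hz).1,
      fun hzB => disjoint_left.mp hdisj hz (hBeq ▸ ⟨hzB, hIE hz⟩)⟩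
    have hIind : M.Indep I := hB₀.indep.subset hIB₀
    by_contra hcon
    have heI : e ∉ I := fun h => (hIE h).2 rfl
    have hecl : e ∈ M.closure I := by
      rw [hIind.insert_indep_iff_of_notMem heI] at hcon
      by_contra h
      exact hcon ⟨he, h⟩
    obtain ⟨J, hJI, hJcl, hJmin⟩ := exists_minimal_closure_subset I.ncard I
      (indep_finite hfin hIind) le_rfl hecl
    have hJne : J.Nonempty := by
      rcases eq_empty_or_nonempty J with rfl | h
      · exact absurd hJcl (nonloop_not_mem_closure_empty hee)
      · exact h
    obtain ⟨w, hwJ⟩ := hJne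
    have hweq : insert w (J \ {w}) = J := insert_diff_singleton.trans (by
      rw [insert_eq_of_mem hwJ])
    have hex : w ∈ M.closure (insert e (J \ {w})) :=
      (Matroid.closure_exchange ⟨by rw [hweq]; exact hJcl, hJmin w hwJ⟩).1
    have hwB₀ : w ∈ B₀ := hIB₀ (hJI hwJ)
    have heB₀ : e ∉ B₀ := fun h => h.2 heBb
    set B₅ := insert e (B₀ \ {w}) with hB₅def
    have hB₅E : B₅ ⊆ M.E := insert_subset he ((diff_subset).trans diff_subset)
    have hsp : M.E ⊆ M.closure B₅ := by
      have h1 : B₀ ⊆ M.closure B₅ := by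
        intro z hz
        by_cases hzw : z = w
        · subst hzw
          refine closure_subset_closure M ?_ hex
          refine insert_subset_insert ?_
          exact diff_subset_diff_left (hJI.trans hIB₀)
        · exact M.subset_closure B₅ hB₅E (mem_insert_of_mem _ ⟨hz, hzw⟩)
      calc M.E = M.closure B₀ := (hB₀.closure_eq).symm
        _ ⊆ M.closure B₅ := closure_subset_closure_of_subset_closure h1
    have hcard : B₅.encard = Intertwine.eRk M M.E := by
      rw [hB₅def, encard_insert_of_notMem (fun h => heB₀ h.1),
        encard_diff_singleton_add_one hwB₀, base_eRk hB₀]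
    have hB₅ : M.IsBase B₅ := base_of_spanning_encard hfin hB₅E hsp hcard
    have hwBs : w ∉ Bs := disjoint_left.mp hdisj (hJI hwJ)
    have hwE : w ∈ M.E \ {e} := hIE (hJI hwJ)
    have hcontra : M✶.Indep (insert w Bs) := by
      rw [dual_indep_iff_exists']
      refine ⟨insert_subset hwE.1 (hBs.left_subset_ground), B₅, hB₅, ?_⟩
      refine disjoint_left.mpr fun z hz hzB₅ => ?_
      rcases mem_insert_iff.mp hz with rfl | hzBs
      · rcases mem_insert_iff.mp hzB₅ with h | h
        · exact hwE.2 h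
        · exact h.2 rfl
      · rcases mem_insert_iff.mp hzB₅ with rfl | h
        · exact (hBs.subset hzBs).2 rfl
        · have hzBb : z ∈ Bb := by rw [hBeq] at hzBs; exact hzBs.1
          exact h.1.2 hzBb
    have heq := hBs.eq_of_subset_indep hcontra (subset_insert _ _)
      (insert_subset hwE hBs.subset)
    exact hwBs (heq ▸ mem_insert w Bs)
  · have hBbE : Bb ⊆ M.E := hBb.subset_ground
    have hBbBs : Bb = Bs := by
      rw [hBeq]
      refine (inter_eq_left.mpr fun z hz => ?_).symm
      exact ⟨hBbE hz, fun h => heBb (h ▸ hz)⟩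
    refine hB₀.indep.subset (insert_subset ⟨he, heBb⟩ fun z hz => ⟨(hIE hz).1,
      fun hzB => disjoint_left.mp hdisj hz (hBbBs ▸ hzB)⟩)

lemma con_indep_dest_loop (he : e ∈ M.E) (hloop : ¬M.Indep {e})
    (hI : (con M {e}).Indep I) : M.Indep I := by
  obtain ⟨hIE, Bs, hBs, hdisj⟩ := con_indep_iff'.mp hI
  obtain ⟨Bb, hBb, hBeq⟩ := hBs.exists_isBase
  have hB₀ : M.IsBase (M.E \ Bb) := hBb.compl_isBase_of_dual
  exact hB₀.indep.subset fun z hz => ⟨(hIE hz).1,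
    fun hzB => disjoint_left.mp hdisj hz (hBeq ▸ ⟨hzB, hIE hz⟩)⟩

lemma eRk_con_loop (he : e ∈ M.E) (hloop : ¬M.Indep {e}) (hX : X ⊆ M.E \ {e}) :
    Intertwine.eRk (con M {e}) X = Intertwine.eRk M X :=
  le_antisymm (eRk_le fun I hI hIX => le_eRk (con_indep_dest_loop he hloop hI) hIX)
    (eRk_le fun I hI hIX => le_eRk (con_indep_of_loop he hloop hI (hIX.trans hX)) hIX)

lemma eRk_con_ne_top (hfin : Intertwine.eRk M M.E ≠ ⊤) (he : e ∈ M.E) (hee : M.Indep {e}) (X : Set α) :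
    Intertwine.eRk (con M {e}) X ≠ ⊤ := by
  have hle : Intertwine.eRk (con M {e}) X ≤ Intertwine.eRk M M.E := eRk_le fun I hI _ => by
    have h := (con_indep_dest hfin he hee hI).subset (subset_insert _ _)
    exact le_eRk h h.subset_ground
  exact fun h => hfin (top_le_iff.mp (h ▸ hle))

lemma eRk_con_nonloop (hfin : Intertwine.eRk M M.E ≠ ⊤) (he : e ∈ M.E) (hee : M.Indep {e})
    (hX : X ⊆ M.E \ {e}) : Intertwine.eRk (con M {e}) X + 1 = Intertwine.eRk M (insert e X) := by
  obtain ⟨I, hIind, hIX, hIcard⟩ := eRk_attained _ X (eRk_con_ne_top hfin he hee X)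
  have hins : M.Indep (insert e I) := con_indep_dest hfin he hee hIind
  have heI : e ∉ I := fun h => ((con_indep_iff'.mp hIind).1 h).2 rfl
  refine le_antisymm ?_ ?_
  · rw [← hIcard, ← encard_insert_of_notMem heI]
    exact le_eRk hins (insert_subset_insert hIX)
  · obtain ⟨J, hJind, hJX, hJcard⟩ := eRk_attained M (insert e X) (eRk_ne_top hfin _)
    have hJfin : J.encard ≠ ⊤ := fun h =>
      (eRk_ne_top hfin (insert e X)) (by rw [← hJcard, h])
    obtain ⟨K, hK, heK, hKsub, hKcard⟩ := augment_to hJind e (J.encard.toNat) {e} hee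
      (singleton_subset_iff.mpr (mem_insert _ _))
      (by rw [encard_singleton]
          calc J.encard = 0 + J.encard := (zero_add _).symm
            _ ≤ 1 + (J.encard.toNat : ℕ∞) := by
                rw [ENat.coe_toNat hJfin]; exact add_le_add_left zero_le _)
    have heKmem : e ∈ K := heK rfl
    have hKXsub : K \ {e} ⊆ X := by
      intro z hz
      have : z ∈ insert e J := hKsub hz.1
      rcases mem_insert_iff.mp this with rfl | hzJ
      · exact absurd rfl hz.2
      · rcases mem_insert_iff.mp (hJX hzJ) with rfl | h
        · exact absurd rfl hz.2
        · exact h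
    have hcon : (con M {e}).Indep (K \ {e}) := by
      refine con_indep_of_insert ?_ (fun z hz => ⟨hK.subset_ground hz.1, hz.2⟩)
      rwa [insert_diff_singleton, insert_eq_of_mem heKmem]
    have h5 : (K \ {e}).encard + 1 = K.encard := encard_diff_singleton_add_one heKmem
    calc Intertwine.eRk M (insert e X) = J.encard := hJcard.symm
      _ ≤ K.encard := hKcard
      _ = (K \ {e}).encard + 1 := h5.symm
      _ ≤ Intertwine.eRk (con M {e}) X + 1 := add_le_add_left (le_eRk hcon hKXsub) 1


/-! ### degenerate case: infinite rank -/

lemma lam_of_top (h : Intertwine.eRk M M.E = ⊤) (X : Set α) : lam M X = 0 := by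
  unfold lam
  rw [h]
  exact ENat.sub_top _

lemma kap_of_top {M : Matroid α} (h : Intertwine.eRk M M.E = ⊤) (hne : S ⊆ M.E \ T) :
    kap M S T = 0 :=
  le_antisymm (le_of_le_of_eq (kap_le_lam subset_rfl hne) (lam_of_top h S)) zero_le

lemma eRk_top_mono {Y : Set α} (h : Intertwine.eRk M Y = ⊤) (e : α) : Intertwine.eRk M (Y \ {e}) = ⊤ := by
  by_contra hc
  set c := Intertwine.eRk M (Y \ {e}) with hcdef
  set m := c.toNat with hmdef
  have hm : (m : ℕ∞) = c := ENat.coe_toNat hc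
  have hlt : (((m + 1 : ℕ)) : ℕ∞) < Intertwine.eRk M Y := by
    rw [h]; exact ENat.coe_lt_top _
  rw [show Intertwine.eRk M Y = ⨆ I ∈ {I : Set α | M.Indep I ∧ I ⊆ Y}, I.encard from rfl,
    lt_iSup_iff] at hlt
  obtain ⟨I, hI⟩ := hlt
  rw [lt_iSup_iff] at hI
  obtain ⟨⟨hI1, hI2⟩, hIlt⟩ := hI
  have hsub : I \ {e} ⊆ Y \ {e} := diff_subset_diff_left hI2
  have hle : (I \ {e}).encard ≤ (m : ℕ∞) := hm ▸ le_eRk (hI1.diff _) hsub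
  have hIle : I.encard ≤ (I \ {e}).encard + 1 := by
    by_cases hx : e ∈ I
    · rw [encard_diff_singleton_add_one hx]
    · rw [diff_singleton_eq_self hx]; exact le_self_add
  have hIlt' : (m : ℕ∞) + 1 < I.encard := by push_cast at hIlt; exact hIlt
  have : (m : ℕ∞) + 1 < (m : ℕ∞) + 1 :=
    lt_of_lt_of_le hIlt' (hIle.trans (add_le_add_left hle 1))
  exact lt_irrefl _ this

lemma eRk_del_ground_top (h : Intertwine.eRk M M.E = ⊤) (e : α) :
    Intertwine.eRk (del M {e}) (del M {e}).E = ⊤ := by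
  rw [del_ground, eRk_del, inter_self]
  exact eRk_top_mono h e

lemma eRk_con_ground_top (h : Intertwine.eRk M M.E = ⊤) (he : e ∈ M.E) :
    Intertwine.eRk (con M {e}) (con M {e}).E = ⊤ := by
  rw [con_ground]
  by_cases hee : M.Indep {e}
  · by_contra hc
    set c := Intertwine.eRk (con M {e}) (M.E \ {e}) with hcdef
    set m := c.toNat with hmdef
    have hm : (m : ℕ∞) = c := ENat.coe_toNat hc
    have hlt : (((m + 1 : ℕ)) : ℕ∞) < Intertwine.eRk M M.E := by rw [h]; exact ENat.coe_lt_top _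
    rw [show Intertwine.eRk M M.E = ⨆ I ∈ {I : Set α | M.Indep I ∧ I ⊆ M.E}, I.encard from rfl,
      lt_iSup_iff] at hlt
    obtain ⟨J, hJ⟩ := hlt
    rw [lt_iSup_iff] at hJ
    obtain ⟨⟨hJ1, hJ2⟩, hJlt⟩ := hJ
    have hJ2card : ((m + 2 : ℕ) : ℕ∞) ≤ J.encard := by
      have := Order.add_one_le_of_lt hJlt
      calc ((m + 2 : ℕ) : ℕ∞) = ((m+1 : ℕ) : ℕ∞) + 1 := by push_cast; ring
        _ ≤ J.encard := this
    obtain ⟨J', hJ'sub, hJ'card⟩ := Set.exists_subset_encard_eq hJ2card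
    have hJ'ind : M.Indep J' := hJ1.subset hJ'sub
    obtain ⟨K, hK, heK, hKsub, hKcard⟩ := augment_to hJ'ind e (m + 2) {e} hee
      (singleton_subset_iff.mpr (mem_insert _ _))
      (by rw [hJ'card, encard_singleton]; push_cast; exact le_add_self)
    have heKmem : e ∈ K := heK rfl
    have hcon : (con M {e}).Indep (K \ {e}) := by
      refine con_indep_of_insert ?_ (fun z hz => ⟨hK.subset_ground hz.1, hz.2⟩)
      rwa [insert_diff_singleton, insert_eq_of_mem heKmem]
    have h5 : (K \ {e}).encard + 1 = K.encard := encard_diff_singleton_add_one heKmem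
    have hle : (K \ {e}).encard ≤ (m : ℕ∞) :=
      hm ▸ le_eRk hcon (fun z hz => ⟨hK.subset_ground hz.1, hz.2⟩)
    have : ((m + 2 : ℕ) : ℕ∞) ≤ (m : ℕ∞) + 1 := by
      calc ((m + 2:ℕ) : ℕ∞) ≤ K.encard := hJ'card ▸ hKcard
        _ = (K \ {e}).encard + 1 := h5.symm
        _ ≤ (m : ℕ∞) + 1 := add_le_add_left hle 1
    have h2 : (m : ℕ) + 2 ≤ m + 1 := by
      have h' : ((m + 2 : ℕ) : ℕ∞) ≤ ((m + 1 : ℕ) : ℕ∞) := by push_cast; exact this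
      exact_mod_cast h'
    omega
  · rw [eRk_con_loop he hee subset_rfl]
    exact eRk_top_mono h e

/-! ### cast translations for minors -/

lemma nr_del_eq (hfin : Intertwine.eRk M M.E ≠ ⊤) (Y : Set α) :
    nr (del M {e}) Y = nr M (Y ∩ (M.E \ {e})) := by
  unfold nr; rw [eRk_del]

lemma eRk_del_ground_ne_top (hfin : Intertwine.eRk M M.E ≠ ⊤) (e : α) :
    Intertwine.eRk (del M {e}) (del M {e}).E ≠ ⊤ := by
  rw [del_ground, eRk_del, inter_self]
  exact eRk_ne_top hfin _

lemma lam_del_cast (hfin : Intertwine.eRk M M.E ≠ ⊤) (hXE : X ⊆ M.E \ {e}) :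
    lam (del M {e}) X =
      ((nr M X + nr M ((M.E \ {e}) \ X) - nr M (M.E \ {e}) : ℕ) : ℕ∞) := by
  rw [lam_cast (eRk_del_ground_ne_top hfin e) X]
  congr 1
  rw [nr_del_eq hfin, nr_del_eq hfin, nr_del_eq hfin, del_ground,
    inter_eq_left.mpr hXE, inter_self, inter_eq_left.mpr (diff_subset)]

lemma nr_con_nonloop (hfin : Intertwine.eRk M M.E ≠ ⊤) (he : e ∈ M.E) (hee : M.Indep {e})
    (hXE : X ⊆ M.E \ {e}) : nr (con M {e}) X + 1 = nr M (insert e X) := by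
  have h := eRk_con_nonloop hfin he hee hXE
  rw [← coe_nr hfin (insert e X)] at h
  rw [← ENat.coe_toNat (eRk_con_ne_top hfin he hee X)] at h
  exact_mod_cast h

lemma eRk_con_ground_ne_top (hfin : Intertwine.eRk M M.E ≠ ⊤) (he : e ∈ M.E) :
    Intertwine.eRk (con M {e}) (con M {e}).E ≠ ⊤ := by
  rw [con_ground]
  by_cases hee : M.Indep {e}
  · exact eRk_con_ne_top hfin he hee _
  · rw [eRk_con_loop he hee subset_rfl]
    exact eRk_ne_top hfin _

lemma insert_ground_diff (he : e ∈ M.E) : insert e (M.E \ {e}) = M.E := by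
  rw [insert_diff_singleton, insert_eq_of_mem he]

lemma compl_in_minor (he : e ∈ M.E) (hXE : X ⊆ M.E \ {e}) :
    (M.E \ {e}) \ X = (M.E \ X) \ {e} := by
  ext z; constructor
  · rintro ⟨⟨h1, h2⟩, h3⟩; exact ⟨⟨h1, h3⟩, h2⟩
  · rintro ⟨⟨h1, h2⟩, h3⟩; exact ⟨⟨h1, h3⟩, h2⟩

lemma insert_compl_minor (he : e ∈ M.E) (hXE : X ⊆ M.E \ {e}) :
    insert e ((M.E \ {e}) \ X) = M.E \ X := by
  rw [compl_in_minor he hXE, insert_diff_singleton,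
    insert_eq_of_mem (show e ∈ M.E \ X from ⟨he, fun h => (hXE h).2 rfl⟩)]

lemma lam_con_cast_nonloop (hfin : Intertwine.eRk M M.E ≠ ⊤) (he : e ∈ M.E) (hee : M.Indep {e})
    (hXE : X ⊆ M.E \ {e}) :
    lam (con M {e}) X =
      ((nr M (insert e X) + nr M (M.E \ X) - (nr M M.E + 1) : ℕ) : ℕ∞) := by
  rw [lam_cast (eRk_con_ground_ne_top hfin he) X]
  congr 1
  have h1 := nr_con_nonloop hfin he hee hXE
  have h2 := nr_con_nonloop hfin he hee (diff_subset : (M.E \ {e}) \ X ⊆ M.E \ {e})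
  have h3 := nr_con_nonloop hfin he hee (subset_rfl : M.E \ {e} ⊆ M.E \ {e})
  rw [insert_compl_minor he hXE] at h2
  rw [insert_ground_diff he] at h3
  rw [con_ground]
  omega

lemma nr_con_loop (hfin : Intertwine.eRk M M.E ≠ ⊤) (he : e ∈ M.E) (hee : ¬M.Indep {e})
    (hXE : X ⊆ M.E \ {e}) : nr (con M {e}) X = nr M X := by
  unfold nr; rw [eRk_con_loop he hee hXE]


/-! ### set identities -/

section SetIds
variable {E A B C : Set α}

lemma sid1 (h : e ∈ A) : insert e (A \ {e}) = A := by
  rw [insert_diff_singleton, insert_eq_of_mem h]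

lemma sid2 (heA : e ∈ A) (heE : e ∈ E) : E \ (A \ {e}) = insert e (E \ A) := by
  ext z
  simp only [mem_diff, mem_insert_iff, mem_singleton_iff]
  constructor
  · rintro ⟨hzE, hz⟩
    by_cases hze : z = e
    · exact Or.inl hze
    · exact Or.inr ⟨hzE, fun hzA => hz ⟨hzA, hze⟩⟩
  · rintro (rfl | ⟨hzE, hzA⟩)
    · exact ⟨heE, fun hz => hz.2 rfl⟩
    · exact ⟨hzE, fun hz => hzA hz.1⟩

lemma sid3 (heC : e ∈ C) : (B \ {e}) ∩ C = (B ∩ C) \ {e} := by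
  ext z; simp only [mem_inter_iff, mem_diff, mem_singleton_iff]; tauto

lemma sid4 (heC : e ∈ C) : (B \ {e}) ∪ C = B ∪ C := by
  ext z; simp only [mem_union, mem_diff, mem_singleton_iff]
  constructor
  · rintro (⟨h, _⟩ | h); exacts [Or.inl h, Or.inr h]
  · rintro (h | h)
    · by_cases hze : z = e
      · exact Or.inr (hze ▸ heC)
      · exact Or.inl ⟨h, hze⟩
    · exact Or.inr h

lemma sid5 (heC : e ∉ C) : (B \ {e}) ∩ C = B ∩ C := by
  ext z; simp only [mem_inter_iff, mem_diff, mem_singleton_iff]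
  exact ⟨fun h => ⟨h.1.1, h.2⟩, fun h => ⟨⟨h.1, fun hz => heC (hz ▸ h.2)⟩, h.2⟩⟩

lemma sid6 (heC : e ∉ C) : (B \ {e}) ∪ C = (B ∪ C) \ {e} := by
  ext z; simp only [mem_union, mem_diff, mem_singleton_iff]
  constructor
  · rintro (⟨h, h2⟩ | h)
    · exact ⟨Or.inl h, h2⟩
    · exact ⟨Or.inr h, fun hz => heC (hz ▸ h)⟩
  · rintro ⟨(h | h), h2⟩
    · exact Or.inl ⟨h, h2⟩
    · exact Or.inr h

lemma sid7 : E \ (A ∩ C) = (E \ A) ∪ (E \ C) := by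
  ext z; simp only [mem_diff, mem_union, mem_inter_iff]; tauto

lemma sid8 : E \ (A ∪ C) = (E \ A) ∩ (E \ C) := by
  ext z; simp only [mem_diff, mem_union, mem_inter_iff]; tauto

lemma sid9 (heA : e ∉ A) (heE : e ∈ E) : E \ A = insert e ((E \ {e}) \ A) := by
  ext z
  simp only [mem_diff, mem_insert_iff, mem_singleton_iff]
  constructor
  · rintro ⟨hzE, hzA⟩
    by_cases hze : z = e
    · exact Or.inl hze
    · exact Or.inr ⟨⟨hzE, hze⟩, hzA⟩
  · rintro (rfl | ⟨⟨h1, _⟩, h3⟩)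
    · exact ⟨heE, heA⟩
    · exact ⟨h1, h3⟩

lemma sid10 (heA : e ∉ A) : E \ (insert e A) = (E \ {e}) \ A := by
  ext z; simp only [mem_diff, mem_insert_iff, mem_singleton_iff]; tauto

lemma sid11 (heA : e ∈ A) (hAe : A ⊆ E) : (E \ {e}) \ (A \ {e}) = E \ A := by
  ext z; simp only [mem_diff, mem_singleton_iff]
  constructor
  · rintro ⟨⟨h1, h2⟩, h3⟩
    exact ⟨h1, fun hzA => h3 ⟨hzA, h2⟩⟩
  · rintro ⟨h1, h2⟩
    exact ⟨⟨h1, fun hz => h2 (hz ▸ heA)⟩, fun hz => h2 hz.1⟩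

end SetIds

/-! ### main finite-rank development -/

def Feas (M : Matroid α) (S T X : Set α) : Prop := S ⊆ X ∧ X ⊆ M.E \ T

def LL (M : Matroid α) (S T : Set α) (kn : ℕ) (A : Set α) : Prop :=
  Feas M S T A ∧ lam M A = (kn : ℕ∞)

lemma lam_eq_nat_iff (hfin : Intertwine.eRk M M.E ≠ ⊤) (hXE : X ⊆ M.E) {c : ℕ} :
    lam M X = (c : ℕ∞) ↔ nr M X + nr M (M.E \ X) = c + nr M M.E := by
  rw [lam_cast hfin]
  have hg := nr_ground_le hfin hXE
  rw [Nat.cast_inj]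
  omega

lemma nat_le_lam_iff (hfin : Intertwine.eRk M M.E ≠ ⊤) (hXE : X ⊆ M.E) {c : ℕ} :
    (c : ℕ∞) ≤ lam M X ↔ c + nr M M.E ≤ nr M X + nr M (M.E \ X) := by
  rw [lam_cast hfin]
  have hg := nr_ground_le hfin hXE
  rw [Nat.cast_le]
  omega

section Main

variable {S T : Set α} {kn : ℕ} {A B C X : Set α}

lemma Feas.subset_ground (h : Feas M S T X) : X ⊆ M.E := h.2.trans diff_subset

lemma feas_ge (hfin : Intertwine.eRk M M.E ≠ ⊤) (hkap : kap M S T = (kn : ℕ∞))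
    (hfeas : Feas M S T X) : kn + nr M M.E ≤ nr M X + nr M (M.E \ X) :=
  (nat_le_lam_iff hfin hfeas.subset_ground).mp (hkap ▸ kap_le_lam hfeas.1 hfeas.2)

lemma LL_iff (hfin : Intertwine.eRk M M.E ≠ ⊤) :
    LL M S T kn X ↔ Feas M S T X ∧ nr M X + nr M (M.E \ X) = kn + nr M M.E := by
  unfold LL
  constructor
  · rintro ⟨h1, h2⟩
    exact ⟨h1, (lam_eq_nat_iff hfin h1.subset_ground).mp h2⟩
  · rintro ⟨h1, h2⟩
    exact ⟨h1, (lam_eq_nat_iff hfin h1.subset_ground).mpr h2⟩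

lemma exists_LL (hfin : Intertwine.eRk M M.E ≠ ⊤) (hS : S ⊆ M.E) (hST : Disjoint S T)
    (hkap : kap M S T = (kn : ℕ∞)) : ∃ A, LL M S T kn A := by
  obtain ⟨A, h1, h2, h3⟩ := exists_kap_min (M := M) (S := S) (T := T)
    (fun z hz => ⟨hS hz, disjoint_left.mp hST hz⟩)
  exact ⟨A, ⟨h1, h2⟩, h3.trans hkap⟩

lemma LL_uncross (hfin : Intertwine.eRk M M.E ≠ ⊤) (hkap : kap M S T = (kn : ℕ∞))
    (hA : LL M S T kn A) (hC : LL M S T kn C) :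
    LL M S T kn (A ∩ C) ∧ LL M S T kn (A ∪ C) ∧
    nr M (A ∩ C) + nr M (A ∪ C) = nr M A + nr M C ∧
    nr M (M.E \ (A ∩ C)) + nr M (M.E \ (A ∪ C)) = nr M (M.E \ A) + nr M (M.E \ C) := by
  have hAE := hA.1.subset_ground
  have hCE := hC.1.subset_ground
  have hfi : Feas M S T (A ∩ C) := ⟨subset_inter hA.1.1 hC.1.1, inter_subset_left.trans hA.1.2⟩
  have hfu : Feas M S T (A ∪ C) := ⟨hA.1.1.trans subset_union_left, union_subset hA.1.2 hC.1.2⟩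
  have s1 := nr_submod hfin hAE hCE
  have s2 := nr_submod hfin (diff_subset : M.E \ A ⊆ M.E) (diff_subset : M.E \ C ⊆ M.E)
  rw [← sid7, ← sid8] at s2
  have m1 := feas_ge hfin hkap hfi
  have m2 := feas_ge hfin hkap hfu
  have eA := ((LL_iff hfin).mp hA).2
  have eC := ((LL_iff hfin).mp hC).2
  refine ⟨(LL_iff hfin).mpr ⟨hfi, by omega⟩, (LL_iff hfin).mpr ⟨hfu, by omega⟩, by omega, by omega⟩

lemma closure_uncross (hfin : Intertwine.eRk M M.E ≠ ⊤) (hAE : A ⊆ M.E) (hCE : C ⊆ M.E)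
    (hmod : nr M (A ∩ C) + nr M (A ∪ C) = nr M A + nr M C)
    (hx : x ∈ M.closure A) (hy : x ∈ M.closure C) : x ∈ M.closure (A ∩ C) := by
  have hxE : x ∈ M.E := mem_ground_of_mem_closure hx
  rw [mem_closure_iff_nr hfin (inter_subset_left.trans hAE) hxE]
  have h1 := (mem_closure_iff_nr hfin hAE hxE).mp hx
  have h2 := (mem_closure_iff_nr hfin hCE hxE).mp hy
  have s := nr_submod hfin (insert_subset hxE hAE) (insert_subset hxE hCE)
  rw [← insert_union_distrib, ← insert_inter_distrib] at s
  have m1 : nr M (A ∪ C) ≤ nr M (insert x (A ∪ C)) := nr_mono hfin (subset_insert _ _)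
  have m2 : nr M (A ∩ C) ≤ nr M (insert x (A ∩ C)) := nr_mono hfin (subset_insert _ _)
  omega


/-! ### witnesses -/

def Wit (M : Matroid α) (S T : Set α) (kn : ℕ) (e : α) (A : Set α) : Prop :=
  LL M S T kn A ∧ LL M S T kn (A \ {e}) ∧ e ∈ A ∧
  ((e ∈ M.closure (A \ {e}) ∧ e ∈ M.closure (M.E \ A)) ∨
   (e ∉ M.closure (A \ {e}) ∧ e ∉ M.closure (M.E \ A)))

lemma sid12 {E A : Set α} (e : α) : (E \ {e}) \ (A \ {e}) = (E \ A) \ {e} := by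
  ext z; simp only [mem_diff, mem_singleton_iff]; tauto

lemma sid13 {X : Set α} (hXE : X ⊆ M.E) (he : e ∈ M.E) : insert e X ∪ (M.E \ X) = M.E := by
  apply subset_antisymm
  · exact union_subset (insert_subset he hXE) diff_subset
  · intro z hz
    by_cases hzX : z ∈ X
    · exact Or.inl (mem_insert_of_mem _ hzX)
    · exact Or.inr ⟨hz, hzX⟩

lemma sid14 {X : Set α} (he : e ∈ M.E) (heX : e ∉ X) :
    insert e X ∩ (M.E \ X) = {e} := by
  ext z
  simp only [mem_inter_iff, mem_insert_iff, mem_diff, mem_singleton_iff]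
  constructor
  · rintro ⟨rfl | hzX, _, hzX'⟩
    · rfl
    · exact absurd hzX hzX'
  · rintro rfl
    exact ⟨Or.inl rfl, he, heX⟩

lemma nr_part {U : Set α} (hfin : Intertwine.eRk M M.E ≠ ⊤) (hXU : X ⊆ U) (hU : U ⊆ M.E) :
    nr M U ≤ nr M X + nr M (U \ X) := by
  have h := nr_submod (Y := U \ X) hfin (hXU.trans hU) (diff_subset.trans hU)
  rwa [union_diff_cancel hXU, inter_diff_self,
    show nr M ∅ = 0 from by unfold nr; rw [eRk_empty]; rfl, add_zero] at h

lemma nr_singleton_nonloop (hl : M.Indep {e}) : nr M {e} = 1 := by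
  unfold nr
  rw [Basis_eRk hl.isBasis_self, encard_singleton]
  rfl

lemma loop_mem_closure (he : e ∈ M.E) (hl : ¬M.Indep {e}) (X : Set α) : e ∈ M.closure X := by
  have h0 : e ∈ M.closure ∅ := by
    by_contra h
    refine hl ?_
    have := (M.empty_indep.insert_indep_iff_of_notMem (notMem_empty e)).mpr ⟨he, h⟩
    rwa [insert_empty_eq] at this
  exact closure_subset_closure M (empty_subset X) h0

lemma nonloop_of_noncoloop (he : e ∈ M.E) (hco : e ∉ M.closure (M.E \ {e})) : M.Indep {e} := by
  by_contra hl
  exact hco (loop_mem_closure he hl _)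

end Main

section Main2

variable {S T : Set α} {kn : ℕ} {A B C X Y : Set α}
variable {hfin : Intertwine.eRk M M.E ≠ ⊤}

-- rank of ground minus a point, by loop/coloop status
lemma nr_habs (hfin : Intertwine.eRk M M.E ≠ ⊤) (he : e ∈ M.E) (hl : ¬M.Indep {e}) (hY : Y ⊆ M.E) : nr M (Y \ {e}) = nr M Y := by
  by_cases heY : e ∈ Y
  · have h := nr_insert_eq_of_mem_closure hfin (loop_mem_closure he hl (Y \ {e}))
    rw [sid1 heY] at h
    exact h.symm
  · rw [diff_singleton_eq_self heY]

lemma coloop_insert (hfin : Intertwine.eRk M M.E ≠ ⊤) (he : e ∈ M.E) (hcl : e ∉ M.closure (M.E \ {e})) (hY : Y ⊆ M.E \ {e}) :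
    nr M (insert e Y) = nr M Y + 1 :=
  nr_insert_eq_add_one hfin (hY.trans diff_subset) he
    (fun h => hcl (closure_subset_closure M hY h))

lemma noncoloop_ground (hfin : Intertwine.eRk M M.E ≠ ⊤) (he : e ∈ M.E) (hcl : e ∈ M.closure (M.E \ {e})) : nr M (M.E \ {e}) = nr M M.E := by
  have h := nr_insert_eq_of_mem_closure hfin hcl
  rw [insert_ground_diff he] at h
  exact h.symm

lemma feas_minor_S (hS : S ⊆ M.E) (hST : Disjoint S T) (heS : e ∉ S) : S ⊆ (M.E \ {e}) \ T :=
  fun z hz => ⟨⟨hS hz, fun h => heS (h ▸ hz)⟩, disjoint_left.mp hST hz⟩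

/-- upper bound: deleting a single element never raises `kap` above `kn`. -/
lemma kap_del_le (hfin : Intertwine.eRk M M.E ≠ ⊤) (hS : S ⊆ M.E) (hST : Disjoint S T)
    (hkap : kap M S T = (kn : ℕ∞)) (he : e ∈ M.E) (heS : e ∉ S) :
    kap (del M {e}) S T ≤ (kn : ℕ∞) := by
  obtain ⟨A, hA⟩ := exists_LL hfin hS hST hkap
  have hAE := hA.1.subset_ground
  have harith := ((LL_iff hfin).mp hA).2
  have hfeas1 : S ⊆ A \ {e} := fun z hz => ⟨hA.1.1 hz, fun h => heS (h ▸ hz)⟩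
  have hfeas2 : A \ {e} ⊆ (del M {e}).E \ T := by
    rw [del_ground]
    rintro z ⟨hzA, hze⟩
    exact ⟨⟨(hA.1.2 hzA).1, hze⟩, (hA.1.2 hzA).2⟩
  refine le_trans (kap_le_lam hfeas1 hfeas2) ?_
  rw [lam_del_cast hfin (diff_subset_diff_left hAE), sid12, Nat.cast_le]
  -- goal : nr (A\e) + nr ((E\A)\e) - nr (E\e) ≤ kn
  have m1 : nr M (A \ {e}) ≤ nr M A := nr_mono hfin diff_subset
  have m2 : nr M ((M.E \ A) \ {e}) ≤ nr M (M.E \ A) := nr_mono hfin diff_subset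
  by_cases hcl : e ∈ M.closure (M.E \ {e})
  · have hg := noncoloop_ground hfin he hcl
    omega
  · -- coloop
    have hg : nr M (M.E \ {e}) + 1 = nr M M.E := by
      have := coloop_insert hfin he hcl (subset_rfl : M.E \ {e} ⊆ M.E \ {e})
      rw [insert_ground_diff he] at this
      omega
    by_cases heA : e ∈ A
    · have h1 : nr M (A \ {e}) + 1 = nr M A := by
        have := coloop_insert hfin he hcl
          (fun z hz => ⟨hAE hz.1, hz.2⟩ : A \ {e} ⊆ M.E \ {e})
        rw [sid1 heA] at this
        omega
      omega
    · have h2 : nr M ((M.E \ A) \ {e}) + 1 = nr M (M.E \ A) := by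
        have := coloop_insert hfin he hcl
          (fun z hz => ⟨hz.1.1, hz.2⟩ : (M.E \ A) \ {e} ⊆ M.E \ {e})
        rw [sid1 (show e ∈ M.E \ A from ⟨he, heA⟩)] at this
        omega
      have h3 : nr M (A \ {e}) = nr M A := by rw [diff_singleton_eq_self heA]
      omega

/-- upper bound for contraction. -/
lemma kap_con_le (hfin : Intertwine.eRk M M.E ≠ ⊤) (hS : S ⊆ M.E) (hST : Disjoint S T)
    (hkap : kap M S T = (kn : ℕ∞)) (he : e ∈ M.E) (heS : e ∉ S) :
    kap (con M {e}) S T ≤ (kn : ℕ∞) := by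
  obtain ⟨A, hA⟩ := exists_LL hfin hS hST hkap
  have hAE := hA.1.subset_ground
  have harith := ((LL_iff hfin).mp hA).2
  have hAeE : A \ {e} ⊆ M.E \ {e} := diff_subset_diff_left hAE
  have hfeas1 : S ⊆ A \ {e} := fun z hz => ⟨hA.1.1 hz, fun h => heS (h ▸ hz)⟩
  have hfeas2 : A \ {e} ⊆ (con M {e}).E \ T := by
    rw [con_ground]
    rintro z ⟨hzA, hze⟩
    exact ⟨⟨(hA.1.2 hzA).1, hze⟩, (hA.1.2 hzA).2⟩
  refine le_trans (kap_le_lam hfeas1 hfeas2) ?_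
  by_cases hl : M.Indep {e}
  · rw [lam_con_cast_nonloop hfin he hl hAeE, Nat.cast_le]
    by_cases heA : e ∈ A
    · rw [sid1 heA, sid2 heA he]
      have m1 : nr M (insert e (M.E \ A)) ≤ nr M (M.E \ A) + 1 := nr_insert_le hfin _ _
      omega
    · rw [diff_singleton_eq_self heA]
      have m1 : nr M (insert e A) ≤ nr M A + 1 := nr_insert_le hfin _ _
      omega
  · -- loop : use nr_con_loop pieces
    rw [lam_cast (eRk_con_ground_ne_top hfin he), Nat.cast_le, con_ground,
      nr_con_loop hfin he hl hAeE, nr_con_loop hfin he hl (diff_subset), 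
      nr_con_loop hfin he hl subset_rfl, sid12]
    have g1 := nr_habs hfin he hl (diff_subset : M.E \ {e} ⊆ M.E)
    have g2 : nr M ((M.E \ {e}) \ {e}) = nr M (M.E \ {e}) := by
      rw [show (M.E \ {e}) \ {e} = M.E \ {e} from by
        rw [diff_singleton_eq_self (fun h => h.2 rfl)]]
    have hg : nr M (M.E \ {e}) = nr M M.E := by
      have := nr_habs hfin he hl (subset_rfl : M.E ⊆ M.E)
      omega
    have h1 : nr M (A \ {e}) = nr M A := nr_habs hfin he hl hAE
    have h2 : nr M ((M.E \ A) \ {e}) = nr M (M.E \ A) := nr_habs hfin he hl diff_subset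
    omega


lemma kap_del_ge_loop (hfin : Intertwine.eRk M M.E ≠ ⊤) (hkap : kap M S T = (kn : ℕ∞))
    (he : e ∈ M.E) (heT : e ∉ T) (hl : ¬M.Indep {e}) :
    (kn : ℕ∞) ≤ kap (del M {e}) S T := by
  refine le_kap fun X h1 h2 => ?_
  rw [del_ground] at h2
  have hXE' : X ⊆ M.E \ {e} := h2.trans diff_subset
  have heX : e ∉ X := fun h => (hXE' h).2 rfl
  rw [lam_del_cast hfin hXE', Nat.cast_le]
  have hg : nr M (M.E \ {e}) = nr M M.E := nr_habs hfin he hl subset_rfl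
  have hc : nr M ((M.E \ {e}) \ X) = nr M (M.E \ X) := by
    rw [compl_in_minor he hXE']
    exact nr_habs hfin he hl diff_subset
  have hf := feas_ge hfin hkap ⟨h1, fun z hz => ⟨(h2 hz).1.1, (h2 hz).2⟩⟩
  omega

lemma kap_con_ge_loop (hfin : Intertwine.eRk M M.E ≠ ⊤) (hkap : kap M S T = (kn : ℕ∞))
    (he : e ∈ M.E) (heT : e ∉ T) (hl : ¬M.Indep {e}) :
    (kn : ℕ∞) ≤ kap (con M {e}) S T := by
  refine le_kap fun X h1 h2 => ?_
  rw [con_ground] at h2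
  have hXE' : X ⊆ M.E \ {e} := h2.trans diff_subset
  rw [lam_cast (eRk_con_ground_ne_top hfin he), Nat.cast_le, con_ground,
    nr_con_loop hfin he hl hXE', nr_con_loop hfin he hl diff_subset,
    nr_con_loop hfin he hl subset_rfl]
  have hg : nr M (M.E \ {e}) = nr M M.E := nr_habs hfin he hl subset_rfl
  have hc : nr M ((M.E \ {e}) \ X) = nr M (M.E \ X) := by
    rw [compl_in_minor he hXE']
    exact nr_habs hfin he hl diff_subset
  have hf := feas_ge hfin hkap ⟨h1, fun z hz => ⟨(h2 hz).1.1, (h2 hz).2⟩⟩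
  omega

lemma kap_del_ge_coloop (hfin : Intertwine.eRk M M.E ≠ ⊤) (hkap : kap M S T = (kn : ℕ∞))
    (he : e ∈ M.E) (heT : e ∉ T) (hcl : e ∉ M.closure (M.E \ {e})) :
    (kn : ℕ∞) ≤ kap (del M {e}) S T := by
  refine le_kap fun X h1 h2 => ?_
  rw [del_ground] at h2
  have hXE' : X ⊆ M.E \ {e} := h2.trans diff_subset
  have heX : e ∉ X := fun h => (hXE' h).2 rfl
  rw [lam_del_cast hfin hXE', Nat.cast_le]
  have hg : nr M (M.E \ {e}) + 1 = nr M M.E := by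
    have := coloop_insert hfin he hcl (subset_rfl : M.E \ {e} ⊆ M.E \ {e})
    rw [insert_ground_diff he] at this
    omega
  have hc : nr M ((M.E \ {e}) \ X) + 1 = nr M (M.E \ X) := by
    rw [compl_in_minor he hXE']
    have := coloop_insert hfin he hcl
      (fun z hz => ⟨hz.1.1, hz.2⟩ : (M.E \ X) \ {e} ⊆ M.E \ {e})
    rw [sid1 (show e ∈ M.E \ X from ⟨he, heX⟩)] at this
    omega
  have hf := feas_ge hfin hkap ⟨h1, fun z hz => ⟨(h2 hz).1.1, (h2 hz).2⟩⟩
  omega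

lemma kap_con_ge_coloop (hfin : Intertwine.eRk M M.E ≠ ⊤) (hkap : kap M S T = (kn : ℕ∞))
    (he : e ∈ M.E) (heT : e ∉ T) (hcl : e ∉ M.closure (M.E \ {e})) :
    (kn : ℕ∞) ≤ kap (con M {e}) S T := by
  have hl : M.Indep {e} := nonloop_of_noncoloop he hcl
  refine le_kap fun X h1 h2 => ?_
  rw [con_ground] at h2
  have hXE' : X ⊆ M.E \ {e} := h2.trans diff_subset
  rw [lam_con_cast_nonloop hfin he hl hXE', Nat.cast_le]
  have hi : nr M (insert e X) = nr M X + 1 := coloop_insert hfin he hcl hXE'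
  have hf := feas_ge hfin hkap ⟨h1, fun z hz => ⟨(h2 hz).1.1, (h2 hz).2⟩⟩
  omega

/-- witness extraction from non-flexibility. -/
lemma exists_Wit (hfin : Intertwine.eRk M M.E ≠ ⊤) (hS : S ⊆ M.E) (hT : T ⊆ M.E) (hST : Disjoint S T)
    (hkap : kap M S T = (kn : ℕ∞)) (he : e ∈ M.E) (heS : e ∉ S) (heT : e ∉ T)
    (hnf : ¬(kap (del M {e}) S T = (kn : ℕ∞) ∧ kap (con M {e}) S T = (kn : ℕ∞))) :
    ∃ A, Wit M S T kn e A := by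
  by_cases hl : M.Indep {e}
  swap
  · exact absurd ⟨le_antisymm (kap_del_le hfin hS hST hkap he heS)
        (kap_del_ge_loop hfin hkap he heT hl),
      le_antisymm (kap_con_le hfin hS hST hkap he heS)
        (kap_con_ge_loop hfin hkap he heT hl)⟩ hnf
  by_cases hco : e ∈ M.closure (M.E \ {e})
  swap
  · exact absurd ⟨le_antisymm (kap_del_le hfin hS hST hkap he heS)
        (kap_del_ge_coloop hfin hkap he heT hco),
      le_antisymm (kap_con_le hfin hS hST hkap he heS)
        (kap_con_ge_coloop hfin hkap he heT hco)⟩ hnf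
  have hgr : nr M (M.E \ {e}) = nr M M.E := noncoloop_ground hfin he hco
  rcases not_and_or.mp hnf with hd | hc
  · -- deletion drops : co-type witness
    obtain ⟨X, h1, h2, h3⟩ := exists_kap_min (M := del M {e}) (S := S) (T := T)
      (by rw [del_ground]; exact feas_minor_S hS hST heS)
    rw [del_ground] at h2
    have hXE' : X ⊆ M.E \ {e} := h2.trans diff_subset
    have hXE : X ⊆ M.E := hXE'.trans diff_subset
    have heX : e ∉ X := fun h => (hXE' h).2 rfl
    have hlt : lam (del M {e}) X < (kn : ℕ∞) :=
      lt_of_le_of_ne (h3.le.trans (kap_del_le hfin hS hST hkap he heS)) (h3 ▸ hd)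
    rw [lam_del_cast hfin hXE', Nat.cast_lt] at hlt
    have hgi : nr M (M.E \ {e}) ≤ nr M X + nr M ((M.E \ {e}) \ X) :=
      nr_part hfin hXE' diff_subset
    have m1 := feas_ge hfin hkap ⟨h1, fun z hz => ⟨(h2 hz).1.1, (h2 hz).2⟩⟩
    have m2 := feas_ge hfin hkap (⟨h1.trans (subset_insert _ _),
      insert_subset ⟨he, heT⟩ (fun z hz => ⟨(h2 hz).1.1, (h2 hz).2⟩)⟩ :
      Feas M S T (insert e X))
    rw [sid10 heX] at m2
    have i1 : nr M (M.E \ X) ≤ nr M ((M.E \ {e}) \ X) + 1 := by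
      rw [sid9 heX he]
      exact nr_insert_le hfin _ _
    have i2 : nr M (insert e X) ≤ nr M X + 1 := nr_insert_le hfin _ _
    -- forced equalities
    have e1 : nr M (insert e X) = nr M X + 1 := by omega
    have e2 : nr M (M.E \ X) = nr M ((M.E \ {e}) \ X) + 1 := by omega
    have e3 : nr M (insert e X) + nr M ((M.E \ {e}) \ X) = kn + nr M M.E := by omega
    have e4 : nr M X + nr M (M.E \ X) = kn + nr M M.E := by omega
    refine ⟨insert e X, ?_, ?_, mem_insert _ _, Or.inr ⟨?_, ?_⟩⟩
    · refine (LL_iff hfin).mpr ⟨⟨h1.trans (subset_insert _ _),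
        insert_subset ⟨he, heT⟩ (fun z hz => ⟨(h2 hz).1.1, (h2 hz).2⟩)⟩, ?_⟩
      rw [sid10 heX]
      exact e3
    · rw [insert_diff_self_of_notMem heX]
      exact (LL_iff hfin).mpr ⟨⟨h1, fun z hz => ⟨(h2 hz).1.1, (h2 hz).2⟩⟩, e4⟩
    · rw [insert_diff_self_of_notMem heX]
      exact (not_mem_closure_iff_nr hfin hXE he).mpr e1
    · rw [sid10 heX]
      refine (not_mem_closure_iff_nr hfin (diff_subset.trans diff_subset) he).mpr ?_
      rw [← sid9 heX he]
      omega
  · -- contraction drops : guts-type witness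
    obtain ⟨X, h1, h2, h3⟩ := exists_kap_min (M := con M {e}) (S := S) (T := T)
      (by rw [con_ground]; exact feas_minor_S hS hST heS)
    rw [con_ground] at h2
    have hXE' : X ⊆ M.E \ {e} := h2.trans diff_subset
    have hXE : X ⊆ M.E := hXE'.trans diff_subset
    have heX : e ∉ X := fun h => (hXE' h).2 rfl
    have hlt : lam (con M {e}) X < (kn : ℕ∞) :=
      lt_of_le_of_ne (h3.le.trans (kap_con_le hfin hS hST hkap he heS)) (h3 ▸ hc)
    rw [lam_con_cast_nonloop hfin he hl hXE', Nat.cast_lt] at hlt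
    have hgi : nr M M.E + 1 ≤ nr M (insert e X) + nr M (M.E \ X) := by
      have hsub := nr_submod hfin (insert_subset he hXE) (diff_subset : M.E \ X ⊆ M.E)
      rw [sid13 hXE he, sid14 he heX, nr_singleton_nonloop hl] at hsub
      omega
    have m1 := feas_ge hfin hkap ⟨h1, fun z hz => ⟨(h2 hz).1.1, (h2 hz).2⟩⟩
    have m2 := feas_ge hfin hkap (⟨h1.trans (subset_insert _ _),
      insert_subset ⟨he, heT⟩ (fun z hz => ⟨(h2 hz).1.1, (h2 hz).2⟩)⟩ :
      Feas M S T (insert e X))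
    rw [sid10 heX] at m2
    have i1 : nr M X ≤ nr M (insert e X) := nr_mono hfin (subset_insert _ _)
    have i2 : nr M ((M.E \ {e}) \ X) ≤ nr M (M.E \ X) :=
      nr_mono hfin (fun z hz => ⟨hz.1.1, hz.2⟩)
    have i3 : nr M (M.E \ X) ≤ nr M ((M.E \ {e}) \ X) + 1 := by
      rw [sid9 heX he]
      exact nr_insert_le hfin _ _
    have e1 : nr M (insert e X) = nr M X := by omega
    have e2 : nr M (M.E \ X) = nr M ((M.E \ {e}) \ X) := by omega
    have e3 : nr M (insert e X) + nr M ((M.E \ {e}) \ X) = kn + nr M M.E := by omega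
    have e4 : nr M X + nr M (M.E \ X) = kn + nr M M.E := by omega
    refine ⟨insert e X, ?_, ?_, mem_insert _ _, Or.inl ⟨?_, ?_⟩⟩
    · refine (LL_iff hfin).mpr ⟨⟨h1.trans (subset_insert _ _),
        insert_subset ⟨he, heT⟩ (fun z hz => ⟨(h2 hz).1.1, (h2 hz).2⟩)⟩, ?_⟩
      rw [sid10 heX]
      exact e3
    · rw [insert_diff_self_of_notMem heX]
      exact (LL_iff hfin).mpr ⟨⟨h1, fun z hz => ⟨(h2 hz).1.1, (h2 hz).2⟩⟩, e4⟩
    · rw [insert_diff_self_of_notMem heX]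
      exact (mem_closure_iff_nr hfin hXE he).mpr e1
    · rw [sid10 heX]
      refine (mem_closure_iff_nr hfin (diff_subset.trans diff_subset) he).mpr ?_
      rw [← sid9 heX he]
      omega


/-- witnesses are preserved by intersecting with a minimizer containing `e`. -/
lemma Wit_inter (hfin : Intertwine.eRk M M.E ≠ ⊤) (hkap : kap M S T = (kn : ℕ∞)) (he : e ∈ M.E)
    (hW : Wit M S T kn e B) (hC : LL M S T kn C) (heC : e ∈ C) :
    Wit M S T kn e (B ∩ C) := by
  obtain ⟨hBL, hBeL, heB, htyp⟩ := hW
  have hBE := hBL.1.subset_ground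
  have hCE := hC.1.subset_ground
  obtain ⟨hLi, hLu, E1, E2⟩ := LL_uncross hfin hkap hBL hC
  obtain ⟨hLi', hLu', E1', E2'⟩ := LL_uncross hfin hkap hBeL hC
  rw [sid3 heC] at hLi' E1' E2'
  rw [sid4 heC] at hLu' E1' E2'
  have heBC : e ∈ B ∩ C := ⟨heB, heC⟩
  refine ⟨hLi, hLi', heBC, ?_⟩
  rcases htyp with ⟨hg1, hg2⟩ | ⟨hc1, hc2⟩
  · left
    constructor
    · have hmpc := closure_uncross hfin (diff_subset.trans hBE) hCE
        (by rw [sid3 heC, sid4 heC]; omega) hg1 (M.subset_closure C hCE heC)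
      rwa [sid3 heC] at hmpc
    · exact closure_subset_closure M (diff_subset_diff_right inter_subset_left) hg2
  · right
    constructor
    · exact fun h => hc1 (closure_subset_closure M
        (diff_subset_diff_left inter_subset_left) h)
    · have hx1 : nr M (M.E \ (B \ {e})) = nr M (M.E \ B) + 1 := by
        rw [sid2 heB he]
        exact (not_mem_closure_iff_nr hfin diff_subset he).mp hc2
      have hx2 : nr M (M.E \ ((B ∩ C) \ {e})) = nr M (M.E \ (B ∩ C)) + 1 := by omega
      rw [sid2 heBC he] at hx2
      exact (not_mem_closure_iff_nr hfin diff_subset he).mpr hx2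

/-- witnesses are preserved by union with a minimizer avoiding `e`. -/
lemma Wit_union (hfin : Intertwine.eRk M M.E ≠ ⊤) (hkap : kap M S T = (kn : ℕ∞)) (he : e ∈ M.E)
    (hW : Wit M S T kn e B) (hC : LL M S T kn C) (heC : e ∉ C) :
    Wit M S T kn e (B ∪ C) := by
  obtain ⟨hBL, hBeL, heB, htyp⟩ := hW
  have hBE := hBL.1.subset_ground
  have hCE := hC.1.subset_ground
  obtain ⟨hLi, hLu, E1, E2⟩ := LL_uncross hfin hkap hBL hC
  obtain ⟨hLi', hLu', E1', E2'⟩ := LL_uncross hfin hkap hBeL hC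
  rw [sid5 heC] at hLi' E1' E2'
  rw [sid6 heC] at hLu' E1' E2'
  have heBC : e ∈ B ∪ C := Or.inl heB
  refine ⟨hLu, hLu', heBC, ?_⟩
  rcases htyp with ⟨hg1, hg2⟩ | ⟨hc1, hc2⟩
  · left
    constructor
    · exact closure_subset_closure M (diff_subset_diff_left subset_union_left) hg1
    · have hmpc := closure_uncross hfin (diff_subset : M.E \ B ⊆ M.E)
        (diff_subset : M.E \ C ⊆ M.E)
        (by rw [← sid7, ← sid8]; omega) hg2
        (M.subset_closure (M.E \ C) diff_subset ⟨he, heC⟩)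
      rwa [← sid8] at hmpc
  · right
    constructor
    · have hx1 : nr M B = nr M (B \ {e}) + 1 := by
        have h := (not_mem_closure_iff_nr hfin (diff_subset.trans hBE) he).mp hc1
        rwa [sid1 heB] at h
      have hx2 : nr M (B ∪ C) = nr M ((B ∪ C) \ {e}) + 1 := by omega
      refine (not_mem_closure_iff_nr hfin ((diff_subset).trans
        (union_subset hBE hCE)) he).mpr ?_
      rwa [sid1 heBC]
    · exact fun h => hc2 (closure_subset_closure M
        (diff_subset_diff_right subset_union_left) h)

/-- the coclosure lemma : if `e` is not spanned by the complementary side, it is spanned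
by `Y` in the dual. -/
lemma mem_dual_closure (hfin : Intertwine.eRk M M.E ≠ ⊤) (he : e ∈ M.E) {Y : Set α}
    (hY : Y ⊆ M.E \ {e}) (hecl : e ∉ M.closure ((M.E \ Y) \ {e})) :
    e ∈ M✶.closure Y := by
  obtain ⟨Is, hIs⟩ := M✶.exists_isBasis Y (hY.trans diff_subset)
  rw [← hIs.closure_eq_closure]
  by_contra hne
  have hIsE : Is ⊆ M✶.E := hIs.indep.subset_ground
  have heIs : e ∉ Is := fun h => hne (M✶.subset_closure Is hIsE h)
  have hind : M✶.Indep (insert e Is) :=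
    (hIs.indep.insert_indep_iff_of_notMem heIs).mpr ⟨he, hne⟩
  obtain ⟨hsubE, B2, hB2, hdisj⟩ := dual_indep_iff_exists'.mp hind
  have heB2 : e ∉ B2 := disjoint_left.mp hdisj (mem_insert _ _)
  have hIsB2 : Disjoint Is B2 := disjoint_left.mpr fun z hz =>
    disjoint_left.mp hdisj (mem_insert_of_mem _ hz)
  have hforce : ∀ x ∈ Y \ Is, ∀ B', M.IsBase B' → Disjoint Is B' → x ∈ B' := by
    intro x hx B' hB' hd
    by_contra hxB'
    have hxind : M✶.Indep (insert x Is) := dual_indep_iff_exists'.mpr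
      ⟨insert_subset ((hY hx.1).1) hIsE, B', hB',
        disjoint_left.mpr fun z hz => by
          rcases mem_insert_iff.mp hz with rfl | hzIs
          · exact hxB'
          · exact disjoint_left.mp hd hzIs⟩
    exact hx.2 (hIs.mem_of_insert_indep hx.1 hxind)
  set Z := (M.E \ Y) \ {e} with hZdef
  have hecl2 : e ∉ M.closure (B2 ∩ Z) :=
    fun h => hecl (closure_subset_closure M inter_subset_right h)
  have heB2Z : e ∉ B2 ∩ Z := fun h => heB2 h.1
  have hBind : M.Indep (insert e (B2 ∩ Z)) :=
    ((hB2.indep.inter_right Z).insert_indep_iff_of_notMem heB2Z).mpr ⟨he, hecl2⟩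
  obtain ⟨B5, hB5, hsub5, hsub5'⟩ := hBind.exists_isBase_subset_union_isBase hB2
  have hcard : B5.encard = B2.encard := (base_eRk hB5).symm.trans (base_eRk hB2)
  have hyex : ∃ y, y ∈ B2 ∧ y ∉ B5 := by
    by_contra h
    push_neg at h
    have heB5 : e ∈ B5 := hsub5 (mem_insert _ _)
    have hsub : insert e B2 ⊆ B5 := insert_subset heB5 h
    have hB2fin : B2.encard ≠ ⊤ :=
      encard_ne_top_iff.mpr (indep_finite hfin hB2.indep)
    have hlt : B2.encard < (insert e B2).encard := by
      rw [encard_insert_of_notMem heB2]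
      exact (ENat.lt_add_one_iff hB2fin).mpr le_rfl
    exact absurd (le_trans (encard_mono hsub) hcard.le) (not_le.mpr hlt)
  obtain ⟨y, hyB2, hyB5⟩ := hyex
  have hyZ : y ∉ Z := fun h => hyB5 (hsub5 (mem_insert_of_mem _ ⟨hyB2, h⟩))
  have hyE : y ∈ M.E := hB2.subset_ground hyB2
  have hye : y ≠ e := fun h => heB2 (h ▸ hyB2)
  have hyY : y ∈ Y \ Is := by
    refine ⟨?_, fun h => disjoint_left.mp hIsB2 h hyB2⟩
    by_contra hyYn
    exact hyZ ⟨⟨hyE, hyYn⟩, hye⟩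
  have hd5 : Disjoint Is B5 := disjoint_left.mpr fun z hz hzB5 => by
    rcases mem_union _ _ _ |>.mp (hsub5' hzB5) with h | h
    · rcases mem_insert_iff.mp h with rfl | h2
      · exact heIs hz
      · exact disjoint_left.mp hIsB2 hz h2.1
    · exact disjoint_left.mp hIsB2 hz h
  exact hyB5 (hforce y hyY B5 hB5 hd5)


/-! ### separation order and chain -/

def Sep (M : Matroid α) (S T : Set α) (kn : ℕ) (e g : α) : Prop :=
  ∃ C, LL M S T kn C ∧ e ∈ C ∧ g ∉ C

lemma sep_total (hfin : Intertwine.eRk M M.E ≠ ⊤) (hkap : kap M S T = (kn : ℕ∞))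
    (he : e ∈ M.E) {g : α} (hne : e ≠ g) {Be Bg : Set α}
    (hWe : Wit M S T kn e Be) (hWg : Wit M S T kn g Bg) :
    Sep M S T kn e g ∨ Sep M S T kn g e := by
  by_cases hgBe : g ∈ Be
  swap
  · exact Or.inl ⟨Be, hWe.1, hWe.2.2.1, hgBe⟩
  by_cases heBg : e ∈ Bg
  swap
  · exact Or.inr ⟨Bg, hWg.1, hWg.2.2.1, heBg⟩
  have hWD := Wit_inter hfin hkap he hWe hWg.1 heBg
  exact Or.inr ⟨(Be ∩ Bg) \ {e}, hWD.2.1, ⟨⟨hgBe, hWg.2.2.1⟩, Ne.symm hne⟩, fun h => h.2 rfl⟩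

lemma exists_min_elt {S T : Set α} {kn : ℕ} (M : Matroid α) (F' : Finset α)
    (hne : F'.Nonempty)
    (htot : ∀ e ∈ F', ∀ g ∈ F', e ≠ g → Sep M S T kn e g ∨ Sep M S T kn g e) :
    ∃ f ∈ F', ∀ g ∈ F', g ≠ f → Sep M S T kn f g := by
  classical
  obtain ⟨f, hf, hmin⟩ := F'.exists_min_image
    (fun x => (F'.filter (fun h => h ≠ x ∧ ¬ Sep M S T kn x h)).card) hne
  refine ⟨f, hf, fun g hg hgf => ?_⟩
  by_contra hsep
  have hsub : F'.filter (fun h => h ≠ g ∧ ¬ Sep M S T kn g h) ⊂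
      F'.filter (fun h => h ≠ f ∧ ¬ Sep M S T kn f h) := by
    constructor
    · intro h hh
      rw [Finset.mem_filter] at hh ⊢
      obtain ⟨hhF, hhg, hnsep⟩ := hh
      refine ⟨hhF, ?_, ?_⟩
      · rintro rfl
        rcases htot h hhF g hg (Ne.symm hgf) with h1 | h1
        · exact hsep h1
        · exact hnsep h1
      · rintro ⟨C, hC, hfC, hhC⟩
        have hgC : g ∈ C := by
          by_contra hgC
          exact hsep ⟨C, hC, hfC, hgC⟩
        exact hnsep ⟨C, hC, hgC, hhC⟩
    · intro hsub'
      have hgmem : g ∈ F'.filter (fun h => h ≠ f ∧ ¬ Sep M S T kn f h) := by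
        rw [Finset.mem_filter]
        exact ⟨hg, hgf, hsep⟩
      have := hsub' hgmem
      rw [Finset.mem_filter] at this
      exact this.2.1 rfl
  have h1 := Finset.card_lt_card hsub
  have h2 := hmin g hg
  omega

lemma exists_first_set (hfin : Intertwine.eRk M M.E ≠ ⊤) (hkap : kap M S T = (kn : ℕ∞))
    (he : e ∈ M.E) {G : Set α} (hWe : Wit M S T kn e B) (hG : LL M S T kn G)
    (heG : e ∉ G) (H : Finset α) :
    (∀ g ∈ H, g ∉ G ∧ ∃ C, LL M S T kn C ∧ e ∈ C ∧ g ∉ C) →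
    ∃ A, Wit M S T kn e A ∧ G ⊆ A ∧ ∀ g ∈ H, g ∉ A := by
  classical
  induction H using Finset.induction_on with
  | empty =>
    intro _
    exact ⟨B ∪ G, Wit_union hfin hkap he hWe hG heG, subset_union_right,
      fun g hg => absurd hg (Finset.notMem_empty g)⟩
  | @insert g H hgH ih =>
    intro hsep
    obtain ⟨A, hWA, hGA, hH⟩ := ih fun g' hg' => hsep g' (Finset.mem_insert_of_mem hg')
    by_cases hgA : g ∈ A
    · obtain ⟨hgG, C, hC, heC, hgC⟩ := hsep g (Finset.mem_insert_self _ _)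
      have hCG := (LL_uncross hfin hkap hC hG).2.1
      have hWA' := Wit_inter hfin hkap he hWA hCG (Or.inl heC)
      refine ⟨A ∩ (C ∪ G), hWA', subset_inter hGA subset_union_right, fun g' hg' => ?_⟩
      rcases Finset.mem_insert.mp hg' with rfl | hg'H
      · rintro ⟨-, (h | h)⟩
        · exact hgC h
        · exact hgG h
      · exact fun h => hH g' hg'H h.1
    · refine ⟨A, hWA, hGA, fun g' hg' => ?_⟩
      rcases Finset.mem_insert.mp hg' with rfl | hg'H
      · exact hgA
      · exact hH g' hg'H

def chainP (M : Matroid α) (S T : Set α) (kn : ℕ) : Set α → List (α × Set α) → Prop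
  | _, [] => True
  | G, p :: r => G ⊆ p.2 ∧ Wit M S T kn p.1 p.2 ∧ (∀ q ∈ r, q.1 ∉ p.2) ∧ chainP M S T kn p.2 r

lemma exists_chain (hfin : Intertwine.eRk M M.E ≠ ⊤) (hkap : kap M S T = (kn : ℕ∞)) :
    ∀ n (F' : Finset α), F'.card = n →
    (∀ f ∈ F', f ∈ M.E ∧ ∃ B, Wit M S T kn f B) →
    ∀ G : Set α, LL M S T kn G → (∀ f ∈ F', f ∉ G) →
    ∃ l : List (α × Set α), (l.map Prod.fst).Nodup ∧
      (∀ a, a ∈ l.map Prod.fst ↔ a ∈ F') ∧ chainP M S T kn G l := by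
  classical
  intro n
  induction n with
  | zero =>
    intro F' hcard _ G _ _
    rw [Finset.card_eq_zero] at hcard
    subst hcard
    exact ⟨[], List.nodup_nil, fun a => by simp, trivial⟩
  | succ n ih =>
    intro F' hcard hprops G hG hGF
    have hne : F'.Nonempty := by
      rw [← Finset.card_pos]
      omega
    have htot : ∀ e ∈ F', ∀ g ∈ F', e ≠ g →
        Sep M S T kn e g ∨ Sep M S T kn g e := by
      intro a ha b hb hab
      obtain ⟨haE, Ba, hBa⟩ := hprops a ha
      obtain ⟨hbE, Bb, hBb⟩ := hprops b hb
      exact sep_total hfin hkap haE hab hBa hBb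
    obtain ⟨f₁, hf₁, hf₁min⟩ := exists_min_elt M F' hne htot
    obtain ⟨hf₁E, B, hB⟩ := hprops f₁ hf₁
    obtain ⟨A₁, hWA₁, hGA₁, hHA₁⟩ := exists_first_set hfin hkap hf₁E hB hG
      (hGF f₁ hf₁) (F'.erase f₁)
      (fun g hg => by
        refine ⟨hGF g (Finset.erase_subset _ _ hg), ?_⟩
        exact hf₁min g (Finset.erase_subset _ _ hg) (Finset.ne_of_mem_erase hg))
    obtain ⟨l', hnd', hmem', hch'⟩ := ih (F'.erase f₁)
      (by rw [Finset.card_erase_of_mem hf₁]; omega)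
      (fun f hf => hprops f (Finset.erase_subset _ _ hf))
      A₁ hWA₁.1 (fun f hf => hHA₁ f hf)
    refine ⟨(f₁, A₁) :: l', ?_, ?_, ?_⟩
    · rw [List.map_cons, List.nodup_cons]
      exact ⟨fun h => (Finset.notMem_erase f₁ F') ((hmem' f₁).mp h), hnd'⟩
    · intro a
      rw [List.map_cons, List.mem_cons, hmem' a]
      constructor
      · rintro (rfl | h)
        · exact hf₁
        · exact Finset.erase_subset _ _ h
      · intro haF'
        by_cases haf : a = f₁
        · exact Or.inl haf
        · exact Or.inr (Finset.mem_erase.mpr ⟨haf, haF'⟩)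
    · exact ⟨hGA₁, hWA₁, fun q hq => hHA₁ q.1 ((hmem' q.1).mp
        (List.mem_map_of_mem (f := Prod.fst) hq)), hch'⟩

lemma chainP_floor {G : Set α} {l : List (α × Set α)} (h : chainP M S T kn G l) :
    ∀ p ∈ l, G ⊆ p.2 := by
  induction l generalizing G with
  | nil => intro p hp; exact absurd hp List.not_mem_nil
  | cons q r ihr =>
    intro p hp
    obtain ⟨h1, h2, h3, h4⟩ := h
    rcases List.mem_cons.mp hp with rfl | hpr
    · exact h1
    · exact h1.trans (ihr h4 p hpr)

lemma chainP_mono {G : Set α} {l : List (α × Set α)} (h : chainP M S T kn G l) :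
    ∀ i j : ℕ, ∀ (hi : i < l.length) (hj : j < l.length), i ≤ j →
      (l.get ⟨i, hi⟩).2 ⊆ (l.get ⟨j, hj⟩).2 := by
  induction l generalizing G with
  | nil => intro i j hi; simp at hi
  | cons q r ihr =>
    intro i j hi hj hij
    obtain ⟨h1, h2, h3, h4⟩ := h
    match i, j with
    | 0, 0 => exact subset_rfl
    | 0, (j'+1) =>
      have : q.2 ⊆ (r.get ⟨j', by simpa using hj⟩).2 :=
        chainP_floor h4 _ (r.get_mem _)
      simpa using this
    | (i'+1), (j'+1) =>
      have := ihr h4 i' j' (by simpa using hi) (by simpa using hj) (by omega)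
      simpa using this

lemma chainP_later {G : Set α} {l : List (α × Set α)} (h : chainP M S T kn G l) :
    ∀ i j : ℕ, ∀ (hi : i < l.length) (hj : j < l.length), i < j →
      (l.get ⟨j, hj⟩).1 ∉ (l.get ⟨i, hi⟩).2 := by
  induction l generalizing G with
  | nil => intro i j hi; simp at hi
  | cons q r ihr =>
    intro i j hi hj hij
    obtain ⟨h1, h2, h3, h4⟩ := h
    match i, j with
    | 0, (j'+1) =>
      have := h3 (r.get ⟨j', by simpa using hj⟩) (r.get_mem _)
      simpa using this
    | (i'+1), (j'+1) =>
      have := ihr h4 i' j' (by simpa using hi) (by simpa using hj) (by omega)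
      simpa using this


lemma chainP_wit {G : Set α} {l : List (α × Set α)} (h : chainP M S T kn G l) :
    ∀ i : ℕ, ∀ hi : i < l.length,
      Wit M S T kn (l.get ⟨i, hi⟩).1 (l.get ⟨i, hi⟩).2 := by
  induction l generalizing G with
  | nil => intro i hi; simp at hi
  | cons q r ihr =>
    intro i hi
    obtain ⟨h1, h2, h3, h4⟩ := h
    match i with
    | 0 => exact h2
    | (i'+1) =>
      have := ihr h4 i' (by simpa using hi)
      simpa using this

lemma exists_floor (hfin : Intertwine.eRk M M.E ≠ ⊤) (hS : S ⊆ M.E) (hST : Disjoint S T)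
    (hkap : kap M S T = (kn : ℕ∞)) (F' : Finset α) :
    (∀ f ∈ F', ∃ B, Wit M S T kn f B) →
    ∃ G, LL M S T kn G ∧ ∀ f ∈ F', f ∉ G := by
  classical
  induction F' using Finset.induction_on with
  | empty =>
    intro _
    obtain ⟨A, hA⟩ := exists_LL hfin hS hST hkap
    exact ⟨A, hA, fun f hf => absurd hf (Finset.notMem_empty f)⟩
  | @insert g H hgH ih =>
    intro hw
    obtain ⟨G, hG, hGH⟩ := ih fun f hf => hw f (Finset.mem_insert_of_mem hf)
    obtain ⟨B, hB⟩ := hw g (Finset.mem_insert_self _ _)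
    refine ⟨G ∩ (B \ {g}), (LL_uncross hfin hkap hG hB.2.1).1, fun f hf => ?_⟩
    rcases Finset.mem_insert.mp hf with rfl | hfH
    · exact fun h => h.2.2 rfl
    · exact fun h => hGH f hfH h.1

end Main2

end IntertwineProof

open Intertwine in
/-- Theorem 8: if `F` is a finite set of elements, none of which is flexible with respect
to `(S,T)`, then `F` admits an ordering `f₁, …, f_t` together with a nested sequence
`A₁ ⊆ ⋯ ⊆ A_t` of `S−T`-separating sets of order `k+1` such that `A_i ∩ F = {f₁, …, f_i}`
and each `f_i` lies in `cl(A_i \ {f_i}) ∩ cl(E \ A_i)` or in the analogous dual closures. -/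
theorem nested_seps_for_nonflexible {α : Type*} (M : Matroid α)
    (S T : Set α) (hS : S ⊆ M.E) (hT : T ⊆ M.E) (hST : Disjoint S T)
    (k : ℕ∞) (hk : kap M S T = k)
    (F : Set α) (hF : F ⊆ M.E \ (S ∪ T)) (hFfin : F.Finite)
    (hnonflex : ∀ e ∈ F, ¬ (kap (del M {e}) S T = k ∧ kap (con M {e}) S T = k)) :
    ∃ (t : ℕ) (f : Fin t → α) (A : Fin t → Set α),
      Function.Injective f ∧ Set.range f = F ∧
      (∀ i, A i ⊆ M.E ∧ S ⊆ A i ∧ T ⊆ M.E \ A i ∧ lam M (A i) = k) ∧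
      (∀ i j : Fin t, i ≤ j → A i ⊆ A j) ∧
      (∀ i, A i ∩ F = f '' {j : Fin t | j ≤ i}) ∧
      (∀ i, f i ∈ M.closure (A i \ {f i}) ∩ M.closure (M.E \ A i) ∨
            f i ∈ M✶.closure (A i \ {f i}) ∩ M✶.closure (M.E \ A i)) := by
  open IntertwineProof in
  · classical
    have hSET : S ⊆ M.E \ T := fun z hz => ⟨hS hz, disjoint_left.mp hST hz⟩
    have hempty : F = ∅ →
        ∃ (t : ℕ) (f : Fin t → α) (A : Fin t → Set α),
        Function.Injective f ∧ Set.range f = F ∧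
        (∀ i, A i ⊆ M.E ∧ S ⊆ A i ∧ T ⊆ M.E \ A i ∧ lam M (A i) = k) ∧
        (∀ i j : Fin t, i ≤ j → A i ⊆ A j) ∧
        (∀ i, A i ∩ F = f '' {j : Fin t | j ≤ i}) ∧
        (∀ i, f i ∈ M.closure (A i \ {f i}) ∩ M.closure (M.E \ A i) ∨
              f i ∈ M✶.closure (A i \ {f i}) ∩ M✶.closure (M.E \ A i)) := by
      intro hFe
      refine ⟨0, Fin.elim0, Fin.elim0, fun i => i.elim0, ?_, fun i => i.elim0,
        fun i => i.elim0, fun i => i.elim0, fun i => i.elim0⟩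
      rw [hFe]
      simp
    by_cases hfin : Intertwine.eRk M M.E = ⊤
    · refine hempty ?_
      by_contra hFne
      obtain ⟨e, he⟩ := nonempty_iff_ne_empty.mpr hFne
      have heE : e ∈ M.E := (hF he).1
      have heS : e ∉ S := fun h => (hF he).2 (Or.inl h)
      have heT : e ∉ T := fun h => (hF he).2 (Or.inr h)
      have hk0 : k = 0 := hk ▸ kap_of_top hfin hSET
      refine hnonflex e he ⟨?_, ?_⟩
      · rw [hk0]
        exact kap_of_top (eRk_del_ground_top hfin e)
          (by rw [del_ground]; exact feas_minor_S hS hST heS)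
      · rw [hk0]
        exact kap_of_top (eRk_con_ground_top hfin heE)
          (by rw [con_ground]; exact feas_minor_S hS hST heS)
    · -- finite rank case
      have hklt : k ≠ ⊤ := by
        intro htop
        have h1 : kap M S T ≤ lam M S := kap_le_lam subset_rfl hSET
        rw [hk, htop, top_le_iff, lam_cast hfin] at h1
        exact (ENat.coe_ne_top _) h1
      set kn := k.toNat with hkn
      have hcast : (kn : ℕ∞) = k := ENat.coe_toNat hklt
      have hkap : kap M S T = (kn : ℕ∞) := by rw [hk, hcast]
      set F' := hFfin.toFinset with hF'
      have hmemF' : ∀ a, a ∈ F' ↔ a ∈ F := fun a => hFfin.mem_toFinset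
      have hwit : ∀ f ∈ F', f ∈ M.E ∧ ∃ B, Wit M S T kn f B := by
        intro f hf
        have hfF := (hmemF' f).mp hf
        have hfE : f ∈ M.E := (hF hfF).1
        have hfS : f ∉ S := fun h => (hF hfF).2 (Or.inl h)
        have hfT : f ∉ T := fun h => (hF hfF).2 (Or.inr h)
        refine ⟨hfE, exists_Wit hfin hS hT hST hkap hfE hfS hfT ?_⟩
        rintro ⟨h1, h2⟩
        exact hnonflex f hfF ⟨by rw [h1, hcast], by rw [h2, hcast]⟩
      obtain ⟨G, hG, hGF'⟩ := exists_floor hfin hS hST hkap F' (fun f hf => (hwit f hf).2)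
      obtain ⟨l, hnd, hmem, hch⟩ := exists_chain hfin hkap F'.card F' rfl hwit G hG hGF'
      refine ⟨l.length, fun i => (l.get i).1, fun i => (l.get i).2, ?_, ?_, ?_, ?_, ?_, ?_⟩
      · -- injective
        intro i j hij
        have hij' : (l.get i).1 = (l.get j).1 := hij
        by_contra hne
        rcases lt_or_gt_of_ne (fun h : (i : ℕ) = (j : ℕ) => hne (Fin.ext h)) with h | h
        · have h1 : (l.get j).1 ∉ (l.get i).2 := chainP_later hch i j i.2 j.2 h
          have h2 : (l.get i).1 ∈ (l.get i).2 := (chainP_wit hch i i.2).2.2.1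
          rw [hij'] at h2
          exact h1 h2
        · have h1 : (l.get i).1 ∉ (l.get j).2 := chainP_later hch j i j.2 i.2 h
          have h2 : (l.get j).1 ∈ (l.get j).2 := (chainP_wit hch j j.2).2.2.1
          rw [← hij'] at h2
          exact h1 h2
      · -- range
        apply subset_antisymm
        · rintro a ⟨i, rfl⟩
          refine (hmemF' _).mp ((hmem _).mp ?_)
          exact List.mem_map_of_mem (f := Prod.fst) (l.get_mem ⟨i.1, i.2⟩)
        · intro a ha
          obtain ⟨p, hp, hpa⟩ := List.mem_map.mp ((hmem a).mpr ((hmemF' a).mpr ha))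
          obtain ⟨i, hi⟩ := List.mem_iff_get.mp hp
          exact ⟨i, by show (l.get i).1 = a; rw [hi, hpa]⟩
      · -- per-index properties
        intro i
        have hW := chainP_wit hch i i.2
        have hLL := hW.1
        have hAE := hLL.1.subset_ground
        refine ⟨hAE, hLL.1.1, ?_, by rw [← hcast]; exact hLL.2⟩
        intro z hz
        exact ⟨hT hz, fun hzA => (hLL.1.2 hzA).2 hz⟩
      · -- monotone
        intro i j hij
        exact chainP_mono hch i j i.2 j.2 hij
      · -- intersection with F
        intro i
        apply subset_antisymm
        · rintro x ⟨hxA, hxF⟩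
          obtain ⟨p, hp, hpa⟩ := List.mem_map.mp ((hmem x).mpr ((hmemF' x).mpr hxF))
          obtain ⟨j, hj⟩ := List.mem_iff_get.mp hp
          have hxj : x = (l.get j).1 := by rw [← hpa, hj]
          rcases le_or_gt j i with hji | hji
          · exact ⟨j, hji, hxj.symm⟩
          · exact absurd (hxj ▸ hxA) (chainP_later hch i j i.2 j.2 hji)
        · rintro x ⟨j, hji, rfl⟩
          refine ⟨chainP_mono hch j i j.2 i.2 hji ((chainP_wit hch j j.2).2.2.1), ?_⟩
          refine (hmemF' _).mp ((hmem _).mp ?_)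
          exact List.mem_map_of_mem (f := Prod.fst) (l.get_mem ⟨j.1, j.2⟩)
      · -- closure conditions
        intro i
        have hW := chainP_wit hch i i.2
        set e := (l.get i).1
        set A := (l.get i).2
        have hLL := hW.1
        have hAE : A ⊆ M.E := hLL.1.subset_ground
        have heA : e ∈ A := hW.2.2.1
        have heE : e ∈ M.E := hAE heA
        rcases hW.2.2.2 with ⟨hg1, hg2⟩ | ⟨hc1, hc2⟩
        · exact Or.inl ⟨hg1, hg2⟩
        · refine Or.inr ⟨?_, ?_⟩
          · refine mem_dual_closure hfin heE (diff_subset_diff_left hAE) ?_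
            rw [sid2 heA heE, insert_diff_self_of_notMem (fun h : e ∈ M.E \ A => h.2 heA)]
            exact hc2
          · refine mem_dual_closure hfin heE
              (fun z hz => ⟨hz.1, fun h => hz.2 (h ▸ heA)⟩) ?_
            rw [diff_diff_cancel_left hAE]
            exact hc1
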